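/- arXiv:2307.10124 — 5 statements merged into one kernel-verified Lean document; each statement's English description precedes it below -/
import Mathlib

section
/- Let R be a Noetherian ring and I_1,…,I_s ⊆ R ideals of positive grade. For each i fix a generating set {f_{ij} : j=1,…,n_i} of I_i containing a nonzerodivisor f_{i j_i}, and set h = ∏_{i=1}^s f_{i j_i}. Let φ : R[Y_{ij}] → R[T_1,…,T_s] be the R-algebra map sending Y_{ij} ↦ f_{ij}T_i. Then ker φ equals the saturation ⟨Y_{ij} f_{ij'} − Y_{ij'} f_{ij} : 1 ≤ i ≤ s, j ≠ j'⟩ : h^∞, i.e., this saturated ideal is the defining ideal of the multi-Rees algebra R(I_1,…,I_s). -/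
open MvPolynomial

private lemma aeval_scale_coeff {R : Type*} [CommRing R] {s : ℕ} (c : Fin s → R)
    (q : MvPolynomial (Fin s) R) (d : Fin s →₀ ℕ) :
    coeff d (aeval (fun i => C (c i) * X i) q) = (∏ i, c i ^ d i) * coeff d q := by
  have hmon : ∀ (v : Fin s →₀ ℕ) (r : R),
      aeval (fun i => C (c i) * X i) (monomial v r)
        = monomial v ((∏ i, c i ^ v i) * r) := by
    intro v r
    have h2 : (∏ i, c i ^ v i) = ∏ i ∈ v.support, c i ^ v i :=
      (Finset.prod_subset (Finset.subset_univ _) (fun i _ hi => by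
        rw [Finsupp.notMem_support_iff.mp hi, pow_zero])).symm
    have h1 : (∏ i ∈ v.support, (C (c i) : MvPolynomial (Fin s) R) ^ v i)
        = C (∏ i, c i ^ v i) := by
      rw [h2, map_prod]
      simp [map_pow]
    rw [aeval_monomial, Finsupp.prod]
    simp only [mul_pow]
    rw [Finset.prod_mul_distrib, h1, monomial_eq, Finsupp.prod, algebraMap_eq, map_mul]
    ring
  conv_lhs => rw [q.as_sum]
  rw [map_sum]
  simp only [hmon]
  rw [MvPolynomial.coeff_sum]
  simp only [coeff_monomial]
  rw [Finset.sum_ite_eq' q.support d]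
  by_cases hd : d ∈ q.support
  · simp [hd]
  · simp [hd, MvPolynomial.notMem_support_iff.mp hd]

private lemma aeval_scale_injective {R : Type*} [CommRing R] {s : ℕ} (c : Fin s → R)
    (hc : ∀ i, c i ∈ nonZeroDivisors R) (q : MvPolynomial (Fin s) R)
    (hq : aeval (fun i => C (c i) * X i) q = 0) : q = 0 := by
  ext d
  have hco := aeval_scale_coeff c q d
  rw [hq, coeff_zero] at hco
  have hu : (∏ i, c i ^ d i) ∈ nonZeroDivisors R :=
    prod_mem fun i _ => pow_mem (hc i) _
  have : coeff d q = 0 := hu.2 _ (by rw [mul_comm]; exact hco.symm)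
  simpa using this

/-- Theorem (defining ideal of the multi-Rees algebra): for ideals `I i` of positive grade
in a Noetherian ring `R`, with generating sets `f i j` containing nonzerodivisors `f i (j₀ i)`,
and `h = ∏ i, f i (j₀ i)`, the kernel of `φ : R[Y_{ij}] → R[T_i]`, `Y_{ij} ↦ f_{ij} T_i`
(whose image is the multi-Rees algebra) is the saturation `⟨Y_{ij} f_{ij'} − Y_{ij'} f_{ij}⟩ : h^∞`. -/
theorem multiRees_defining_ideal {R : Type*} [CommRing R] [IsNoetherianRing R] {s : ℕ}
    (I : Fin s → Ideal R) (n : Fin s → ℕ) (f : (i : Fin s) → Fin (n i) → R)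
    (hgen : ∀ i, Ideal.span (Set.range (f i)) = I i)
    (j₀ : (i : Fin s) → Fin (n i))
    (hnzd : ∀ i, f i (j₀ i) ∈ nonZeroDivisors R)
    (h : R) (hh : h = ∏ i, f i (j₀ i))
    (φ : MvPolynomial (Σ i, Fin (n i)) R →ₐ[R] MvPolynomial (Fin s) R)
    (hφ : φ = aeval (fun p : Σ i, Fin (n i) => C (f p.1 p.2) * X p.1))
    (L : Ideal (MvPolynomial (Σ i, Fin (n i)) R))
    (hL : L = Ideal.span {g | ∃ (i : Fin s) (j j' : Fin (n i)), j ≠ j' ∧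
      g = X (⟨i, j⟩ : Σ i, Fin (n i)) * C (f i j') - X (⟨i, j'⟩ : Σ i, Fin (n i)) * C (f i j)}) :
    -- the image of `φ` is the multi-Rees algebra `R(I_1,…,I_s)`
    φ.range = Algebra.adjoin R {x : MvPolynomial (Fin s) R | ∃ i j, x = C (f i j) * X i} ∧
    -- and its kernel is the saturation `L : h^∞`
    ∀ r : MvPolynomial (Σ i, Fin (n i)) R,
      r ∈ RingHom.ker φ.toRingHom ↔ ∃ m : ℕ, (C h) ^ m * r ∈ L := by
  subst hφ hL hh
  set g : (Σ i, Fin (n i)) → MvPolynomial (Fin s) R :=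
    fun p => C (f p.1 p.2) * X p.1 with hg
  set LL : Ideal (MvPolynomial (Σ i, Fin (n i)) R) :=
    Ideal.span {g | ∃ (i : Fin s) (j j' : Fin (n i)), j ≠ j' ∧
      g = X (⟨i, j⟩ : Σ i, Fin (n i)) * C (f i j') - X (⟨i, j'⟩ : Σ i, Fin (n i)) * C (f i j)}
    with hLL
  set σf : Fin s → Σ i, Fin (n i) := fun i => ⟨i, j₀ i⟩ with hσ
  -- L is contained in the kernel
  have hLker : LL ≤ RingHom.ker (aeval g).toRingHom := by
    rw [hLL, Ideal.span_le]
    rintro x ⟨i, j, j', hjj, rfl⟩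
    simp only [SetLike.mem_coe, RingHom.mem_ker, AlgHom.toRingHom_eq_coe, RingHom.coe_coe,
      map_sub, map_mul, aeval_X, aeval_C, algebraMap_eq, hg]
    ring
  -- the key rewriting lemma
  have key : ∀ r : MvPolynomial (Σ i, Fin (n i)) R, ∃ (m : ℕ) (q : MvPolynomial (Fin s) R),
      C (∏ i, f i (j₀ i)) ^ m * r - rename σf q ∈ LL := by
    intro r
    induction r using MvPolynomial.induction_on with
    | C a =>
        refine ⟨0, C a, ?_⟩
        simp only [pow_zero, one_mul, rename_C, sub_self]
        exact LL.zero_mem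
    | add p p' ih ih' =>
        obtain ⟨m, q, hm⟩ := ih
        obtain ⟨m', q', hm'⟩ := ih'
        refine ⟨m + m',
          C (∏ i, f i (j₀ i)) ^ m' * q + C (∏ i, f i (j₀ i)) ^ m * q', ?_⟩
        have hEq : C (∏ i, f i (j₀ i)) ^ (m + m') * (p + p') -
            rename σf (C (∏ i, f i (j₀ i)) ^ m' * q + C (∏ i, f i (j₀ i)) ^ m * q')
            = C (∏ i, f i (j₀ i)) ^ m' * (C (∏ i, f i (j₀ i)) ^ m * p - rename σf q)
              + C (∏ i, f i (j₀ i)) ^ m *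
                  (C (∏ i, f i (j₀ i)) ^ m' * p' - rename σf q') := by
          simp only [map_add, map_mul, map_pow, rename_C]
          ring
        rw [hEq]
        exact Ideal.add_mem _ (Ideal.mul_mem_left _ _ hm) (Ideal.mul_mem_left _ _ hm')
    | mul_X p v ih =>
        obtain ⟨m, q, hm⟩ := ih
        obtain ⟨i, j⟩ := v
        set c : R := ∏ i' ∈ Finset.univ.erase i, f i' (j₀ i') with hc
        have hhc : (∏ i', f i' (j₀ i')) = f i (j₀ i) * c :=
          (Finset.mul_prod_erase _ _ (Finset.mem_univ i)).symm
        have hgen : X (⟨i, j⟩ : Σ i, Fin (n i)) * C (f i (j₀ i))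
            - X (⟨i, j₀ i⟩ : Σ i, Fin (n i)) * C (f i j) ∈ LL := by
          by_cases hjj : j = j₀ i
          · rw [hjj, sub_self]
            exact LL.zero_mem
          · exact Ideal.subset_span ⟨i, j, j₀ i, hjj, rfl⟩
        refine ⟨m + 1, q * (C (f i j * c) * X i), ?_⟩
        have hEq : C (∏ i', f i' (j₀ i')) ^ (m + 1) * (p * X (⟨i, j⟩ : Σ i, Fin (n i)))
            - rename σf (q * (C (f i j * c) * X i))
            = (C (∏ i', f i' (j₀ i')) ^ m * p - rename σf q)
                * (C (∏ i', f i' (j₀ i')) * X (⟨i, j⟩ : Σ i, Fin (n i)))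
              + rename σf q * (C c *
                  (X (⟨i, j⟩ : Σ i, Fin (n i)) * C (f i (j₀ i))
                    - X (⟨i, j₀ i⟩ : Σ i, Fin (n i)) * C (f i j))) := by
          simp only [map_mul, rename_X, rename_C, C_mul, hσ]
          rw [hhc]
          simp only [C_mul]
          ring
        rw [hEq]
        exact Ideal.add_mem _ (Ideal.mul_mem_right _ _ hm)
          (Ideal.mul_mem_left _ _ (Ideal.mul_mem_left _ _ hgen))
  have hnz : (∏ i, f i (j₀ i)) ∈ nonZeroDivisors R := prod_mem fun i _ => hnzd i
  constructor
  · -- the image of φ is the multi-Rees algebra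
    have hset : {x : MvPolynomial (Fin s) R | ∃ i j, x = C (f i j) * X i} = Set.range g := by
      ext x
      constructor
      · rintro ⟨i, j, rfl⟩; exact ⟨⟨i, j⟩, rfl⟩
      · rintro ⟨⟨i, j⟩, rfl⟩; exact ⟨i, j, rfl⟩
    rw [hset]
    exact (Algebra.adjoin_range_eq_range_aeval R g).symm
  · intro r
    constructor
    · intro hr
      obtain ⟨m, q, hm⟩ := key r
      rw [RingHom.mem_ker] at hr
      have hr' : aeval g r = 0 := hr
      have h1 : aeval g (C (∏ i, f i (j₀ i)) ^ m * r - rename σf q) = 0 := hLker hm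
      have h2 : aeval g (rename σf q) = aeval (fun i : Fin s => C (f i (j₀ i)) * X i) q := by
        rw [aeval_rename]
        congr 1
      rw [map_sub, map_mul, hr', mul_zero, zero_sub, neg_eq_zero, h2] at h1
      have hq0 : q = 0 := aeval_scale_injective (fun i => f i (j₀ i)) hnzd q h1
      rw [hq0, map_zero, sub_zero] at hm
      exact ⟨m, hm⟩
    · rintro ⟨m, hm⟩
      have h1 : aeval g (C (∏ i, f i (j₀ i)) ^ m * r) = 0 := hLker hm
      rw [map_mul, map_pow, aeval_C, algebraMap_eq] at h1
      rw [RingHom.mem_ker]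
      show aeval g r = 0
      ext d
      have h2 : (∏ i, f i (j₀ i)) ^ m * coeff d (aeval g r) = 0 := by
        have := congrArg (coeff d) h1
        rwa [← C_pow, coeff_C_mul, coeff_zero] at this
      have : coeff d (aeval g r) = 0 :=
        (pow_mem hnz m).2 _ (by rw [mul_comm]; exact h2)
      simpa using this
end

section
/- Let R be a commutative Noetherian ring and J an ideal admitting a minimal primary decomposition J = (⋂_{i=1}^r Q_i) ∩ Q where Q is m-primary for a maximal ideal m, and √Q_i = P_i ⊄ m for all i. Then J : (J : m^∞) = Q, where J : m^∞ = ⋂_{i=1}^r Q_i. -/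
/-- For a minimal primary decomposition `J = (⋂ i, Qs i) ⊓ Q` with `Q` `m`-primary for a
maximal ideal `m` and `√(Qs i) = P i ⊄ m`, the saturation `J : m^∞` equals `⋂ i, Qs i`
and `J : (J : m^∞) = Q`. -/
theorem colon_saturation_recovers_primary_component {R : Type*} [CommRing R]
    [IsNoetherianRing R] (m : Ideal R) (hm : m.IsMaximal)
    {r : ℕ} (Q : Ideal R) (Qs : Fin r → Ideal R) (J : Ideal R)
    (hQ : Q.IsPrimary) (hQm : Q.radical = m)
    (hQi : ∀ i, (Qs i).IsPrimary) (hPi : ∀ i, ¬ (Qs i).radical ≤ m)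
    (hJ : J = (⨅ i, Qs i) ⊓ Q)
    -- minimality of the decomposition: distinct radicals and irredundancy
    (hdist : ∀ i j, i ≠ j → (Qs i).radical ≠ (Qs j).radical)
    (hirr : ∀ i, ¬ ((⨅ j ∈ ({i}ᶜ : Set (Fin r)), Qs j) ⊓ Q ≤ Qs i))
    (hirrQ : ¬ (⨅ i, Qs i) ≤ Q)
    (Jsat : Ideal R) (hJsat : Jsat = ⨆ k : ℕ, J.colon ((m ^ k : Ideal R) : Set R)) :
    Jsat = (⨅ i, Qs i) ∧ J.colon Jsat = Q := by
  set N : Ideal R := ⨅ i, Qs i with hN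
  have hJle : J ≤ N := hJ ▸ inf_le_left
  have hJleQ : J ≤ Q := hJ ▸ inf_le_right
  -- there is n with m ^ n ≤ Q
  obtain ⟨n, hn⟩ := Q.exists_radical_pow_le_of_fg (IsNoetherian.noetherian _)
  rw [hQm] at hn
  -- for each i, there is z i ∈ Qs i with z i ∉ m
  have hz : ∀ i, ∃ z : R, z ∈ Qs i ∧ z ∉ m := by
    intro i
    obtain ⟨y, hy, hym⟩ := Set.not_subset.mp (hPi i)
    obtain ⟨k, hk⟩ := hy
    exact ⟨y ^ k, hk, fun h => hym (hm.isPrime.mem_of_pow_mem _ h)⟩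
  choose z hzQ hzm using hz
  -- the product of the z i lies in N but not in m
  have hprod : (∏ i, z i) ∈ N ∧ (∏ i, z i) ∉ m := by
    constructor
    · refine Ideal.mem_iInf.mpr fun i => ?_
      rw [← Finset.prod_erase_mul _ _ (Finset.mem_univ i)]
      exact Ideal.mul_mem_left _ _ (hzQ i)
    · intro h
      have : m.IsPrime := hm.isPrime
      obtain ⟨i, _, hi⟩ := Ideal.IsPrime.prod_mem_iff.mp h
      exact hzm i hi
  have hNm : ¬ N ≤ m := fun h => hprod.2 (h hprod.1)
  -- Jsat = N
  have hsat : Jsat = N := by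
    rw [hJsat]
    apply le_antisymm
    · refine iSup_le fun k => ?_
      intro x hx
      refine Ideal.mem_iInf.mpr fun i => ?_
      -- m is not contained in radical (Qs i)
      have hmi : ¬ m ≤ (Qs i).radical := by
        intro hle
        have hp := Ideal.isPrime_radical (hQi i)
        have := hm.eq_of_le hp.ne_top hle
        exact hPi i (this ▸ le_refl m)
      obtain ⟨y, hym, hyr⟩ := Set.not_subset.mp hmi
      have hyk : y ^ k ∈ m ^ k := Ideal.pow_mem_pow hym k
      have hxy : x * y ^ k ∈ Qs i := by
        have := Submodule.mem_colon.mp hx _ hyk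
        exact Ideal.mem_iInf.mp (hJle this) i
      rcases (Ideal.isPrimary_iff.mp (hQi i)).2 hxy with h | h
      · exact h
      · exact absurd (Ideal.mem_radical_of_pow_mem h) hyr
    · refine le_trans ?_ (le_iSup _ n)
      intro x hx
      refine Submodule.mem_colon.mpr fun p hp => ?_
      rw [hJ]
      exact ⟨Ideal.mul_mem_right _ _ hx, Ideal.mul_mem_left _ _ (hn hp)⟩
  refine ⟨hsat, ?_⟩
  rw [hsat]
  apply le_antisymm
  · intro x hx
    by_contra hxQ
    apply hNm
    intro y hy
    have hxy : x * y ∈ Q := hJleQ (Submodule.mem_colon.mp hx _ hy)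
    rcases (Ideal.isPrimary_iff.mp hQ).2 hxy with h | h
    · exact absurd h hxQ
    · rwa [hQm] at h
  · intro q hq
    refine Submodule.mem_colon.mpr fun y hy => ?_
    rw [hJ]
    exact ⟨Ideal.mul_mem_left _ _ hy, Ideal.mul_mem_right _ _ hq⟩
end

section
/- Let R be a commutative Noetherian ring, m a maximal ideal, and J an ideal such that the localization J R_m is m R_m-primary. Then the natural map R/(J : (J : m^∞)) → R_m/(J R_m) induced by the localization homomorphism R → R_m is an isomorphism of R-modules. -/
/-- If `J R_m` is `m R_m`-primary, then the natural map
`R/(J : (J : m^∞)) → R_m/(J R_m)` is an isomorphism of `R`-modules. -/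
theorem quotient_iso_localization {R : Type*} [CommRing R] [IsNoetherianRing R]
    (m : Ideal R) [m.IsMaximal] (J : Ideal R)
    (hprim : (J.map (algebraMap R (Localization.AtPrime m))).IsPrimary)
    (hrad : (J.map (algebraMap R (Localization.AtPrime m))).radical
      = m.map (algebraMap R (Localization.AtPrime m)))
    (Jsat : Ideal R) (hJsat : Jsat = ⨆ k : ℕ, J.colon ((m ^ k : Ideal R) : Set R)) :
    ∃ e : (R ⧸ J.colon Jsat) ≃ₗ[R]
        (Localization.AtPrime m ⧸ J.map (algebraMap R (Localization.AtPrime m))),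
      ∀ x : R, e (Ideal.Quotient.mk (J.colon Jsat) x)
        = Ideal.Quotient.mk (J.map (algebraMap R (Localization.AtPrime m)))
            (algebraMap R (Localization.AtPrime m) x) := by
  classical
  set S := Localization.AtPrime m with hS
  set I := J.map (algebraMap R S) with hI
  -- S is Noetherian
  have hnoeth : IsNoetherianRing S :=
    IsLocalization.isNoetherianRing m.primeCompl S inferInstance
  -- power of m maps into I
  obtain ⟨k, hk⟩ := Ideal.exists_radical_pow_le_of_fg I (IsNoetherian.noetherian _)
  have hIpow : Ideal.map (algebraMap R S) (m ^ (k + 1)) ≤ I := by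
    rw [Ideal.map_pow, ← hrad]
    exact le_trans (Ideal.pow_le_pow_right (Nat.le_succ k)) hk
  -- membership in comap
  have hmem : ∀ x : R, x ∈ I.comap (algebraMap R S) ↔ ∃ s ∈ m.primeCompl, s * x ∈ J := by
    intro x
    constructor
    · intro hx
      rw [Ideal.mem_comap, hI, IsLocalization.mem_map_algebraMap_iff m.primeCompl S] at hx
      obtain ⟨⟨j, s⟩, hx⟩ := hx
      rw [← map_mul] at hx
      obtain ⟨c, hc⟩ := (IsLocalization.eq_iff_exists m.primeCompl S).mp hx
      refine ⟨(c : R) * (s : R), Submonoid.mul_mem _ c.2 s.2, ?_⟩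
      have : (c : R) * (s : R) * x = (c : R) * (j : R) := by
        rw [← hc]; ring
      rw [this]
      exact J.mul_mem_left _ j.2
    · rintro ⟨s, hs, hsx⟩
      rw [Ideal.mem_comap]
      have hu := IsLocalization.map_units S (⟨s, hs⟩ : m.primeCompl)
      obtain ⟨u, hu⟩ := hu
      have h1 : algebraMap R S (s * x) ∈ I := Ideal.mem_map_of_mem _ hsx
      have h2 : algebraMap R S x = (↑u⁻¹ : S) * algebraMap R S (s * x) := by
        rw [map_mul, ← hu, ← mul_assoc, Units.inv_mul, one_mul]
      rw [h2]
      exact I.mul_mem_left _ h1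
  have hpowcomap : m ^ (k + 1) ≤ I.comap (algebraMap R S) :=
    Ideal.map_le_iff_le_comap.mp hIpow
  -- common denominator
  have key : ∀ (T : Finset R), (∀ t ∈ T, ∃ s ∈ m.primeCompl, s * t ∈ J) →
      ∃ s ∈ m.primeCompl, ∀ t ∈ T, s * t ∈ J := by
    intro T
    induction T using Finset.induction with
    | empty => exact fun _ => ⟨1, Submonoid.one_mem _, fun t ht => absurd ht (Finset.notMem_empty t)⟩
    | @insert a T ha ih =>
      intro h
      obtain ⟨s', hs', hs'J⟩ := ih fun t ht => h t (Finset.mem_insert_of_mem ht)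
      obtain ⟨sa, hsa, hsaJ⟩ := h a (Finset.mem_insert_self a T)
      refine ⟨sa * s', Submonoid.mul_mem _ hsa hs', fun t ht => ?_⟩
      rcases Finset.mem_insert.mp ht with rfl | ht
      · rw [mul_right_comm]; exact J.mul_mem_right s' hsaJ
      · rw [mul_assoc]; exact J.mul_mem_left sa (hs'J t ht)
  obtain ⟨T, hT⟩ := IsNoetherian.noetherian (m ^ (k + 1))
  obtain ⟨s₀, hs₀, hs₀J⟩ := key T fun t ht =>
    (hmem t).mp (hpowcomap (hT ▸ Ideal.subset_span ht))
  have hs₀colon : s₀ ∈ J.colon ((m ^ (k + 1) : Ideal R) : Set R) := by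
    rw [Submodule.mem_colon]
    intro p hp
    rw [← hT] at hp
    refine Submodule.span_induction ?_ ?_ ?_ ?_ hp
    · intro y hy; exact hs₀J y hy
    · simp
    · intro y z _ _ hy hz; rw [smul_add]; exact J.add_mem hy hz
    · intro r y _ hy
      rw [smul_comm]
      exact J.smul_mem r hy
  have hs₀sat : s₀ ∈ Jsat := by
    rw [hJsat]
    exact le_iSup (fun k : ℕ => J.colon ((m ^ k : Ideal R) : Set R)) (k + 1) hs₀colon
  -- sup with powers of m is top
  have hsup : ∀ s : R, s ∈ m.primeCompl → ∀ n : ℕ, Ideal.span {s} ⊔ m ^ (n + 1) = ⊤ := by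
    intro s hs n
    by_contra h
    obtain ⟨M, hM, hle⟩ := Ideal.exists_le_maximal _ h
    have hmM : m ≤ M := by
      intro y hy
      have : y ^ (n + 1) ∈ M := hle (le_sup_right (α := Ideal R) (Ideal.pow_mem_pow hy (n + 1)))
      exact hM.isPrime.mem_of_pow_mem _ this
    have : m = M := (inferInstance : m.IsMaximal).eq_of_le hM.ne_top hmM
    exact hs (this ▸ hle (le_sup_left (α := Ideal R) (Ideal.mem_span_singleton_self s)))
  -- kernel computation
  have hcomap : I.comap (algebraMap R S) = J.colon Jsat := by
    apply le_antisymm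
    · intro x hx
      obtain ⟨s, hs, hsx⟩ := (hmem x).mp hx
      rw [Submodule.mem_colon]
      intro y hy
      rw [hJsat] at hy
      obtain ⟨k', hk'⟩ := (Submodule.mem_iSup_of_directed (fun k : ℕ => J.colon ((m ^ k : Ideal R) : Set R))
        (fun i j => ⟨max i j, Submodule.colon_mono le_rfl (SetLike.coe_subset_coe.mpr (Ideal.pow_le_pow_right (le_max_left i j))),
          Submodule.colon_mono le_rfl (SetLike.coe_subset_coe.mpr (Ideal.pow_le_pow_right (le_max_right i j)))⟩)).mp hy
      have hk'' : y ∈ J.colon ((m ^ (k' + 1) : Ideal R) : Set R) :=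
        Submodule.colon_mono le_rfl (SetLike.coe_subset_coe.mpr (Ideal.pow_le_pow_right (Nat.le_succ k'))) hk'
      have h1 : (1 : R) ∈ Ideal.span {s} ⊔ m ^ (k' + 1) := by
        rw [hsup s hs k']; exact Submodule.mem_top
      obtain ⟨c, hc, b, hb, hcb⟩ := Submodule.mem_sup.mp h1
      obtain ⟨a, rfl⟩ := Ideal.mem_span_singleton'.mp hc
      have hyb : y * b ∈ J := by
        have := Submodule.mem_colon.mp hk'' b hb
        rwa [smul_eq_mul] at this
      have hxy : x • y = (y * a) * (s * x) + x * (y * b) := by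
        have : a * s + b = 1 := hcb
        rw [smul_eq_mul]
        linear_combination (-(x * y)) * this
      rw [hxy]
      exact J.add_mem (J.mul_mem_left _ hsx) (J.mul_mem_left _ hyb)
    · intro x hx
      refine (hmem x).mpr ⟨s₀, hs₀, ?_⟩
      have := Submodule.mem_colon.mp hx s₀ hs₀sat
      rwa [smul_eq_mul, mul_comm] at this
  -- the algebra hom
  let g : R →ₐ[R] (S ⧸ I) := (Ideal.Quotient.mkₐ R I).comp (Algebra.ofId R S)
  have hgker : RingHom.ker g = J.colon Jsat := by
    rw [← hcomap]
    ext x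
    have hgx : g x = Ideal.Quotient.mk I (algebraMap R S x) := rfl
    rw [RingHom.mem_ker, hgx, Ideal.Quotient.eq_zero_iff_mem, Ideal.mem_comap]
  have hgsurj : Function.Surjective g := by
    intro z
    obtain ⟨z', rfl⟩ := Ideal.Quotient.mk_surjective z
    obtain ⟨⟨r, s⟩, rfl⟩ := IsLocalization.mk'_surjective m.primeCompl z'
    have h1 : (1 : R) ∈ Ideal.span {(s : R)} ⊔ m ^ (k + 1) := by
      rw [hsup (s : R) s.2 k]; exact Submodule.mem_top
    obtain ⟨c, hc, b, hb, hcb⟩ := Submodule.mem_sup.mp h1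
    obtain ⟨a, rfl⟩ := Ideal.mem_span_singleton'.mp hc
    refine ⟨a * r, ?_⟩
    have hdiffmul : (algebraMap R S (a * r) - IsLocalization.mk' S r s) * algebraMap R S (s : R)
        = algebraMap R S (-(r * b)) := by
      rw [sub_mul, IsLocalization.mk'_spec, ← map_mul, ← map_sub]
      congr 1
      linear_combination r * hcb
    have hrb : algebraMap R S (-(r * b)) ∈ I := by
      rw [map_neg]
      exact I.neg_mem (hIpow (Ideal.mem_map_of_mem _ (Ideal.mul_mem_left _ r hb)))
    have hu := IsLocalization.map_units S s
    obtain ⟨u, hu⟩ := hu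
    have hdiff : algebraMap R S (a * r) - IsLocalization.mk' S r s ∈ I := by
      have h2 : algebraMap R S (a * r) - IsLocalization.mk' S r s
          = algebraMap R S (-(r * b)) * (↑u⁻¹ : S) := by
        rw [← hdiffmul, ← hu, mul_assoc, Units.mul_inv, mul_one]
      rw [h2]
      exact I.mul_mem_right _ hrb
    show Ideal.Quotient.mk I (algebraMap R S (a * r)) = Ideal.Quotient.mk I (IsLocalization.mk' S r s)
    exact Ideal.Quotient.eq.mpr hdiff
  -- assemble
  let e1 : (R ⧸ J.colon Jsat) ≃ₐ[R] (R ⧸ RingHom.ker g) :=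
    Ideal.quotientEquivAlgOfEq R hgker.symm
  let e2 : (R ⧸ RingHom.ker g) ≃ₐ[R] (S ⧸ I) :=
    Ideal.quotientKerAlgEquivOfSurjective hgsurj
  refine ⟨(e1.trans e2).toLinearEquiv, fun x => ?_⟩
  show e2 (e1 (Ideal.Quotient.mk (J.colon Jsat) x)) = _
  rw [show e1 (Ideal.Quotient.mk (J.colon Jsat) x) = Ideal.Quotient.mk (RingHom.ker g) x from
    Ideal.quotientEquivAlgOfEq_mk R hgker.symm x]
  exact Ideal.kerLiftAlg_mk g x
end

section
/- Let R = ℂ[x,y,z] (or ℚ[x,y,z]) and F_0 = z^5 + x y^7 + x^{15}. The Jacobian ideal J(F_0) = (y^7 + 15x^{14}, 7x y^6, 5z^4) is primary to m = (x,y,z), and the multiplicity (colength under this system-of-parameters situation computed as Hilbert–Samuel multiplicity) e(y^7+15x^{14}, x y^6, z^4) of the ideal generated by the parameter system (y^7+15x^{14}, x y^6, z^4) equals 364. -/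
open MvPolynomial

set_option maxRecDepth 4000
namespace BS
abbrev R3 := MvPolynomial (Fin 3) ℚ
noncomputable def f1 : R3 := X 1 ^ 7 + 15 * X 0 ^ 14
noncomputable def f2 : R3 := X 0 * X 1 ^ 6
noncomputable def f3 : R3 := X 2 ^ 4

noncomputable def deg (a b c : ℕ) : Fin 3 →₀ ℕ :=
  Finsupp.single 0 a + Finsupp.single 1 b + Finsupp.single 2 c

@[simp] lemma deg_apply0 (a b c : ℕ) : deg a b c 0 = a := by simp [deg]
@[simp] lemma deg_apply1 (a b c : ℕ) : deg a b c 1 = b := by simp [deg]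
@[simp] lemma deg_apply2 (a b c : ℕ) : deg a b c 2 = c := by simp [deg]

lemma eq_deg (s : Fin 3 →₀ ℕ) : s = deg (s 0) (s 1) (s 2) := by
  ext i; fin_cases i <;> simp

lemma mono_eq (a b c : ℕ) :
    (monomial (deg a b c) (1:ℚ) : R3) = X 0 ^ a * X 1 ^ b * X 2 ^ c := by
  rw [X_pow_eq_monomial, X_pow_eq_monomial, X_pow_eq_monomial, monomial_mul, monomial_mul, deg]
  simp

lemma mono_congr {s t : Fin 3 →₀ ℕ} (h : s = t) :
    (monomial s (1:ℚ) : R3) = monomial t 1 := by rw [h]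

lemma mono_congr' {s t : Fin 3 →₀ ℕ} (r : ℚ) (h : s = t) :
    (monomial s r : R3) = monomial t r := by rw [h]

lemma f1_eq : f1 = monomial (Finsupp.single 1 7) (1:ℚ) + monomial (Finsupp.single 0 14) (15:ℚ) := by
  rw [f1, X_pow_eq_monomial, X_pow_eq_monomial, show (15:R3) = C 15 from (map_ofNat C 15).symm,
    C_mul_monomial]
  norm_num

lemma f2_eq : f2 = monomial (Finsupp.single 0 1 + Finsupp.single 1 6) (1:ℚ) := by
  rw [f2, X_pow_eq_monomial, X, monomial_mul, one_mul]

lemma f3_eq : f3 = monomial (Finsupp.single 2 4) (1:ℚ) := by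
  rw [f3, X_pow_eq_monomial]

lemma sub1 (j c : ℕ) : deg 0 (j+7) c - Finsupp.single 1 7 = deg 0 j c := by
  ext i; fin_cases i <;> simp [Finsupp.tsub_apply, deg, Finsupp.single_apply]

lemma sub2 (j c : ℕ) : deg 14 j c - Finsupp.single 0 14 = deg 0 j c := by
  ext i; fin_cases i <;> simp [Finsupp.tsub_apply, deg, Finsupp.single_apply]

lemma coeff_f3 (q : R3) {a b c : ℕ} (hc : c ≤ 3) : coeff (deg a b c) (q * f3) = 0 := by
  rw [f3_eq, coeff_mul_monomial', if_neg]
  rw [Finsupp.single_le_iff]; simp; omega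

lemma coeff_f2 (q : R3) {a b c : ℕ} (h : a = 0 ∨ b ≤ 5) :
    coeff (deg a b c) (q * f2) = 0 := by
  rw [f2_eq, coeff_mul_monomial', if_neg]
  intro hle
  have h0 := hle 0
  have h1 := hle 1
  simp [Finsupp.single_apply] at h0 h1
  omega

lemma coeff_f1 (q : R3) {a b c : ℕ} (hb : b ≤ 6) (ha : a ≤ 13) :
    coeff (deg a b c) (q * f1) = 0 := by
  have h1 : ¬ Finsupp.single 1 7 ≤ deg a b c := by
    rw [Finsupp.single_le_iff]; simp; omega
  have h2 : ¬ Finsupp.single 0 14 ≤ deg a b c := by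
    rw [Finsupp.single_le_iff]; simp; omega
  rw [f1_eq, mul_add, coeff_add, coeff_mul_monomial', coeff_mul_monomial', if_neg h1, if_neg h2,
    add_zero]

lemma coeff_f1' (q : R3) {j : ℕ} (c : ℕ) (hj : j ≤ 6) :
    coeff (deg 0 (j+7) c) (q * f1) = coeff (deg 0 j c) q := by
  have h1 : Finsupp.single 1 7 ≤ deg 0 (j+7) c := by
    rw [Finsupp.single_le_iff]; simp
  have h2 : ¬ Finsupp.single 0 14 ≤ deg 0 (j+7) c := by
    rw [Finsupp.single_le_iff]; simp
  rw [f1_eq, mul_add, coeff_add, coeff_mul_monomial', coeff_mul_monomial', if_pos h1, if_neg h2,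
    sub1, add_zero, mul_one]

lemma coeff_f1'' (q : R3) {j : ℕ} (c : ℕ) (hj : j ≤ 6) :
    coeff (deg 14 j c) (q * f1) = 15 * coeff (deg 0 j c) q := by
  have h1 : ¬ Finsupp.single 1 7 ≤ deg 14 j c := by
    rw [Finsupp.single_le_iff]; simp; omega
  have h2 : Finsupp.single 0 14 ≤ deg 14 j c := by
    rw [Finsupp.single_le_iff]; simp
  rw [f1_eq, mul_add, coeff_add, coeff_mul_monomial', coeff_mul_monomial', if_neg h1, if_pos h2,
    sub2, zero_add]
  ring


noncomputable def I : Ideal R3 := Ideal.span {f1, f2, f3}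

def V : Type := (Fin 14 × Fin 6 × Fin 4) ⊕ (Fin 4 ⊕ (Fin 6 × Fin 4))

instance : Fintype V := by unfold V; infer_instance
instance : DecidableEq V := by unfold V; infer_instance
attribute [reducible] V

noncomputable def vdeg : V → (Fin 3 →₀ ℕ)
  | .inl (a, b, c) => deg a b c
  | .inr (.inl c) => deg 0 6 c
  | .inr (.inr (j, c)) => deg 0 (j + 7) c

noncomputable def mono (v : V) : R3 := monomial (vdeg v) 1

@[simp] lemma vdeg_inl (a : Fin 14) (b : Fin 6) (c : Fin 4) :
    vdeg (Sum.inl (a, b, c)) = deg a b c := rfl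
@[simp] lemma vdeg_inr1 (c : Fin 4) : vdeg (Sum.inr (Sum.inl c)) = deg 0 6 c := rfl
@[simp] lemma vdeg_inr2 (j : Fin 6) (c : Fin 4) :
    vdeg (Sum.inr (Sum.inr (j, c))) = deg 0 (j + 7) c := rfl

noncomputable def comp : V → (R3 →ₗ[ℚ] ℚ)
  | .inl (a, b, c) => lcoeff ℚ (deg a b c)
  | .inr (.inl c) => lcoeff ℚ (deg 0 6 c)
  | .inr (.inr (j, c)) => lcoeff ℚ (deg 0 (j + 7) c) - (1/15 : ℚ) • lcoeff ℚ (deg 14 j c)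

noncomputable def phi : R3 →ₗ[ℚ] (V → ℚ) := LinearMap.pi comp

lemma phi_mul_f1 (q : R3) : phi (q * f1) = 0 := by
  funext v
  rcases v with ⟨a, b, c⟩ | c | ⟨j, c⟩ <;>
    simp only [phi, LinearMap.pi_apply, comp, lcoeff_apply, Pi.zero_apply,
      LinearMap.sub_apply, LinearMap.smul_apply, smul_eq_mul]
  · rw [coeff_f1 q (by omega : (b:ℕ) ≤ 6) (by omega : (a:ℕ) ≤ 13)]
  · rw [coeff_f1 q (by omega) (by omega)]
  · rw [coeff_f1' q c (by omega : (j:ℕ) ≤ 6), coeff_f1'' q c (by omega : (j:ℕ) ≤ 6)]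
    ring

lemma phi_mul_f2 (q : R3) : phi (q * f2) = 0 := by
  funext v
  rcases v with ⟨a, b, c⟩ | c | ⟨j, c⟩ <;>
    simp only [phi, LinearMap.pi_apply, comp, lcoeff_apply, Pi.zero_apply,
      LinearMap.sub_apply, LinearMap.smul_apply, smul_eq_mul]
  · rw [coeff_f2 q (Or.inr (by omega : (b:ℕ) ≤ 5))]
  · rw [coeff_f2 q (Or.inl rfl)]
  · rw [coeff_f2 q (Or.inl rfl), coeff_f2 q (Or.inr (by omega : (j:ℕ) ≤ 5))]
    ring

lemma phi_mul_f3 (q : R3) : phi (q * f3) = 0 := by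
  funext v
  rcases v with ⟨a, b, c⟩ | c | ⟨j, c⟩ <;>
    simp only [phi, LinearMap.pi_apply, comp, lcoeff_apply, Pi.zero_apply,
      LinearMap.sub_apply, LinearMap.smul_apply, smul_eq_mul]
  · rw [coeff_f3 q (by omega : (c:ℕ) ≤ 3)]
  · rw [coeff_f3 q (by omega : (c:ℕ) ≤ 3)]
  · rw [coeff_f3 q (by omega : (c:ℕ) ≤ 3), coeff_f3 q (by omega : (c:ℕ) ≤ 3)]
    ring

lemma phi_ker (p : R3) (hp : p ∈ I) : phi p = 0 := by
  rw [I] at hp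
  rw [show ({f1, f2, f3} : Set R3) = insert f1 (insert f2 {f3}) from rfl] at hp
  rw [Ideal.mem_span_insert] at hp
  obtain ⟨q1, z1, hz1, rfl⟩ := hp
  rw [Ideal.mem_span_insert] at hz1
  obtain ⟨q2, z2, hz2, rfl⟩ := hz1
  rw [Ideal.mem_span_singleton] at hz2
  obtain ⟨q3, rfl⟩ := hz2
  rw [map_add, map_add, phi_mul_f1, mul_comm f3 q3, phi_mul_f3, phi_mul_f2]
  simp


lemma deg_eq_deg {a b c a' b' c' : ℕ} :
    deg a b c = deg a' b' c' ↔ a = a' ∧ b = b' ∧ c = c' := by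
  constructor
  · intro h
    have h0 := congrArg (fun f => f 0) h
    have h1 := congrArg (fun f => f 1) h
    have h2 := congrArg (fun f => f 2) h
    simp only [deg_apply0, deg_apply1, deg_apply2] at h0 h1 h2
    exact ⟨h0, h1, h2⟩
  · rintro ⟨rfl, rfl, rfl⟩; rfl

lemma vdeg_14 (v : V) : vdeg v 0 ≤ 13 := by
  rcases v with ⟨a, b, c⟩ | c | ⟨j, c⟩ <;> simp [vdeg] <;> omega

@[simp] lemma comp_inl (a : Fin 14) (b : Fin 6) (c : Fin 4) :
    comp (Sum.inl (a, b, c)) = lcoeff ℚ (deg a b c) := rfl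
@[simp] lemma comp_inr1 (c : Fin 4) : comp (Sum.inr (Sum.inl c)) = lcoeff ℚ (deg 0 6 c) := rfl
@[simp] lemma comp_inr2 (j : Fin 6) (c : Fin 4) :
    comp (Sum.inr (Sum.inr (j, c))) =
      lcoeff ℚ (deg 0 (j + 7) c) - (1/15 : ℚ) • lcoeff ℚ (deg 14 j c) := rfl

lemma phi_mono (v w : V) : phi (mono v) w = if vdeg v = vdeg w then 1 else 0 := by
  rcases w with ⟨a', b', c'⟩ | c' | ⟨j', c'⟩ <;>
    simp only [mono, phi, LinearMap.pi_apply, comp_inl, comp_inr1, comp_inr2, lcoeff_apply,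
      coeff_monomial, LinearMap.sub_apply, LinearMap.smul_apply, smul_eq_mul,
      vdeg_inl, vdeg_inr1, vdeg_inr2]
  · congr
  · congr
  have h2 : vdeg v ≠ deg 14 ↑j' ↑c' := by
    intro h
    have := congrArg (fun f => f 0) h
    simp only [deg_apply0] at this
    have := vdeg_14 v
    omega
  rw [if_neg h2, mul_zero, sub_zero]
  congr

lemma vdeg_inj : Function.Injective vdeg := by
  rintro (⟨a, b, c⟩ | c | ⟨j, c⟩) (⟨a', b', c'⟩ | c' | ⟨j', c'⟩) h <;>
    simp only [vdeg, deg_eq_deg] at h <;>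
    obtain ⟨h0, h1, h2⟩ := h
  · cases Fin.ext h0; cases Fin.ext h1; cases Fin.ext h2; rfl
  · exfalso; have := b.is_lt; omega
  · exfalso; have := b.is_lt; have := j'.is_lt; omega
  · exfalso; have := b'.is_lt; omega
  · cases Fin.ext h2; rfl
  · exfalso; have := j'.is_lt; omega
  · exfalso; have := b'.is_lt; have := j.is_lt; omega
  · exfalso; have := j.is_lt; omega
  · cases Fin.ext (by omega : (j:ℕ) = j'); cases Fin.ext h2; rfl


lemma h15 : (C (1/15 : ℚ) : R3) * 15 = 1 := by
  rw [show (15:R3) = C 15 from (map_ofNat C 15).symm, ← C_mul]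
  norm_num

lemma f1_mem : f1 ∈ I := Ideal.subset_span (by simp)
lemma f2_mem : f2 ∈ I := Ideal.subset_span (by simp)
lemma f3_mem : f3 ∈ I := Ideal.subset_span (by simp)

lemma x15_mem : (X 0 : R3) ^ 15 ∈ I := by
  have key : (X 0 : R3) ^ 15 = (C (1/15) * X 0) * f1 + (-(C (1/15)) * X 1) * f2 := by
    rw [f1, f2]
    linear_combination (-(X 0 : R3) ^ 15) * h15
  rw [key]
  exact add_mem (Ideal.mul_mem_left _ _ f1_mem) (Ideal.mul_mem_left _ _ f2_mem)

lemma y13_mem : (X 1 : R3) ^ 13 ∈ I := by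
  have key : (X 1 : R3) ^ 13 = X 1 ^ 6 * f1 + (-(15 * X 0 ^ 13)) * f2 := by
    rw [f1, f2]; ring
  rw [key]
  exact add_mem (Ideal.mul_mem_left _ _ f1_mem) (Ideal.mul_mem_left _ _ f2_mem)

lemma deg_add (a b c a' b' c' : ℕ) :
    deg a b c + deg a' b' c' = deg (a + a') (b + b') (c + c') := by
  ext i; fin_cases i <;> simp [deg, Finsupp.single_apply]

lemma mono_mul (a b c a' b' c' : ℕ) :
    (monomial (deg a b c) (1:ℚ) : R3) * monomial (deg a' b' c') (1:ℚ) =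
      monomial (deg (a + a') (b + b') (c + c')) (1:ℚ) := by
  rw [monomial_mul, deg_add, one_mul]

lemma f1_eq' : f1 = monomial (deg 0 7 0) (1:ℚ) + monomial (deg 14 0 0) (15:ℚ) := by
  rw [f1_eq]
  rw [mono_congr' (s := Finsupp.single 1 7) (t := deg 0 7 0) 1 (by ext i; fin_cases i <;> simp [deg, Finsupp.single_apply]),
    mono_congr' (s := Finsupp.single 0 14) (t := deg 14 0 0) 15 (by ext i; fin_cases i <;> simp [deg, Finsupp.single_apply])]

lemma f2_eq' : f2 = monomial (deg 1 6 0) (1:ℚ) := by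
  rw [f2_eq]
  exact mono_congr (by ext i; fin_cases i <;> simp [deg, Finsupp.single_apply])

lemma f3_eq' : f3 = monomial (deg 0 0 4) (1:ℚ) := by
  rw [f3_eq]
  exact mono_congr (by ext i; fin_cases i <;> simp [deg, Finsupp.single_apply])

noncomputable def W : Submodule ℚ R3 :=
  Submodule.restrictScalars ℚ (I : Submodule R3 R3) ⊔ Submodule.span ℚ (Set.range mono)

lemma mem_W_of_mem_I {p : R3} (hp : p ∈ I) : p ∈ W :=
  Submodule.mem_sup_left hp

lemma mem_W_of_mono (v : V) : mono v ∈ W :=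
  Submodule.mem_sup_right (Submodule.subset_span ⟨v, rfl⟩)

lemma mono_mem_W (a b c : ℕ) : (monomial (deg a b c) (1:ℚ) : R3) ∈ W := by
  by_cases hc : 4 ≤ c
  · apply mem_W_of_mem_I
    have : (monomial (deg a b c) (1:ℚ) : R3) = monomial (deg a b (c - 4)) 1 * f3 := by
      rw [f3_eq', mono_mul]
      exact mono_congr (deg_eq_deg.mpr ⟨by omega, by omega, by omega⟩)
    rw [this]
    exact Ideal.mul_mem_left _ _ f3_mem
  by_cases hb : 6 ≤ b
  · by_cases ha : 1 ≤ a
    · apply mem_W_of_mem_I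
      have : (monomial (deg a b c) (1:ℚ) : R3) = monomial (deg (a-1) (b-6) c) 1 * f2 := by
        rw [f2_eq', mono_mul]
        exact mono_congr (deg_eq_deg.mpr ⟨by omega, by omega, by omega⟩)
      rw [this]
      exact Ideal.mul_mem_left _ _ f2_mem
    · -- a = 0
      by_cases hb13 : 13 ≤ b
      · apply mem_W_of_mem_I
        have hx : (X 1 : R3) ^ 13 = monomial (deg 0 13 0) 1 := by
          rw [X_pow_eq_monomial]
          exact mono_congr (by ext i; fin_cases i <;> simp [deg, Finsupp.single_apply])
        have : (monomial (deg a b c) (1:ℚ) : R3) = monomial (deg a (b-13) c) 1 * X 1 ^ 13 := by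
          rw [hx, mono_mul]
          exact mono_congr (deg_eq_deg.mpr ⟨by omega, by omega, by omega⟩)
        rw [this]
        exact Ideal.mul_mem_left _ _ y13_mem
      · -- standard region 2/3 : a = 0, 6 ≤ b ≤ 12
        rcases eq_or_lt_of_le hb with hb6 | hb7
        · have : (monomial (deg a b c) (1:ℚ) : R3) = mono (Sum.inr (Sum.inl ⟨c, by omega⟩)) := by
            show _ = monomial _ _
            rw [vdeg_inr1]
            exact mono_congr (deg_eq_deg.mpr ⟨by omega, by omega, rfl⟩)
          rw [this]; exact mem_W_of_mono _
        · have : (monomial (deg a b c) (1:ℚ) : R3) =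
              mono (Sum.inr (Sum.inr (⟨b - 7, by omega⟩, ⟨c, by omega⟩))) := by
            show _ = monomial _ _
            rw [vdeg_inr2]
            exact mono_congr (deg_eq_deg.mpr ⟨by omega, by show (b:ℕ) = b - 7 + 7; omega, rfl⟩)
          rw [this]; exact mem_W_of_mono _
  · -- b ≤ 5
    by_cases ha : a ≤ 13
    · have : (monomial (deg a b c) (1:ℚ) : R3) =
          mono (Sum.inl (⟨a, by omega⟩, ⟨b, by omega⟩, ⟨c, by omega⟩)) := by
        show _ = monomial _ _
        rw [vdeg_inl]
      rw [this]; exact mem_W_of_mono _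
    by_cases ha15 : 15 ≤ a
    · apply mem_W_of_mem_I
      have hx : (X 0 : R3) ^ 15 = monomial (deg 15 0 0) 1 := by
        rw [X_pow_eq_monomial]
        exact mono_congr (by ext i; fin_cases i <;> simp [deg, Finsupp.single_apply])
      have : (monomial (deg a b c) (1:ℚ) : R3) = monomial (deg (a-15) b c) 1 * X 0 ^ 15 := by
        rw [hx, mono_mul]
        exact mono_congr (deg_eq_deg.mpr ⟨by omega, by omega, by omega⟩)
      rw [this]
      exact Ideal.mul_mem_left _ _ x15_mem
    · -- a = 14
      have ha14 : a = 14 := by omega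
      subst ha14
      have key : (monomial (deg 14 b c) (1:ℚ) : R3) =
          (C (1/15) * monomial (deg 0 b c) 1) * f1 +
            (-(1/15 : ℚ)) • monomial (deg 0 (b+7) c) 1 := by
        rw [f1, mono_eq, mono_eq, mono_eq, smul_eq_C_mul, map_neg]
        linear_combination (-((X 0:R3)^14 * X 1 ^ b * X 2 ^ c)) * h15
      rw [key]
      refine add_mem (mem_W_of_mem_I (Ideal.mul_mem_left _ _ f1_mem)) ?_
      refine Submodule.smul_mem _ _ ?_
      have : (monomial (deg 0 (b+7) c) (1:ℚ) : R3) =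
          mono (Sum.inr (Sum.inr (⟨b, by omega⟩, ⟨c, by omega⟩))) := by
        show _ = monomial _ _
        rw [vdeg_inr2]
      rw [this]; exact mem_W_of_mono _

lemma W_top : W = ⊤ := by
  rw [eq_top_iff]
  intro p _
  rw [← support_sum_monomial_coeff p]
  refine Submodule.sum_mem _ fun s _ => ?_
  have : (monomial s (coeff s p) : R3) = coeff s p • monomial s 1 := by
    rw [smul_monomial, smul_eq_mul, mul_one]
  rw [this, eq_deg s]
  exact Submodule.smul_mem _ _ (mono_mem_W _ _ _)


noncomputable def mkL : R3 →ₗ[ℚ] R3 ⧸ I := (Ideal.Quotient.mkₐ ℚ I).toLinearMap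

lemma mkL_apply (p : R3) : mkL p = Ideal.Quotient.mk I p := rfl

lemma span_image_top :
    Submodule.span ℚ (Set.range fun v => Ideal.Quotient.mk I (mono v)) = ⊤ := by
  have hsurj : Function.Surjective mkL := fun q => by
    obtain ⟨p, hp⟩ := Ideal.Quotient.mk_surjective (I := I) q
    exact ⟨p, hp⟩
  have h1 : Submodule.map mkL W = ⊤ := by
    rw [W_top, Submodule.map_top, LinearMap.range_eq_top]
    exact hsurj
  rw [W, Submodule.map_sup, Submodule.map_span] at h1
  have h2 : Submodule.map mkL (Submodule.restrictScalars ℚ (I : Submodule R3 R3)) = ⊥ := by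
    rw [eq_bot_iff]
    rintro q ⟨p, hp, rfl⟩
    rw [Submodule.mem_bot, mkL_apply, Ideal.Quotient.eq_zero_iff_mem]
    exact hp
  rw [h2, bot_sup_eq, ← Set.range_comp] at h1
  rw [← h1]
  rfl

instance : Module.Finite ℚ (R3 ⧸ I) := by
  constructor
  rw [Submodule.fg_def]
  exact ⟨_, Set.finite_range _, span_image_top⟩

lemma card_V : Fintype.card V = 364 := by
  rw [Fintype.card_congr (Equiv.cast (show V = ((Fin 14 × Fin 6 × Fin 4) ⊕ (Fin 4 ⊕ (Fin 6 × Fin 4))) from rfl))]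
  simp

lemma finrank_le : Module.finrank ℚ (R3 ⧸ I) ≤ 364 := by
  classical
  rw [← finrank_top, ← span_image_top]
  refine le_trans (finrank_span_le_card _) ?_
  rw [Set.toFinset_range]
  calc (Finset.univ.image fun v => Ideal.Quotient.mk I (mono v)).card
      ≤ Finset.univ.card := Finset.card_image_le
    _ = 364 := by rw [Finset.card_univ, card_V]

lemma indep : LinearIndependent ℚ (fun v : V => Ideal.Quotient.mk I (mono v)) := by
  rw [Fintype.linearIndependent_iff]
  intro g hg w
  have hmem : (∑ v, g v • mono v) ∈ I := by
    rw [← Ideal.Quotient.eq_zero_iff_mem, ← mkL_apply, map_sum]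
    simpa only [map_smul, mkL_apply] using hg
  have h0 := phi_ker _ hmem
  have hw : phi (∑ v, g v • mono v) w = g w := by
    rw [map_sum]
    simp only [map_smul, Finset.sum_apply, Pi.smul_apply, phi_mono, smul_eq_mul]
    rw [Finset.sum_eq_single w]
    · rw [if_pos rfl, mul_one]
    · intro v _ hv
      rw [if_neg (fun h => hv (vdeg_inj h)), mul_zero]
    · intro h; exact absurd (Finset.mem_univ w) h
  rw [h0] at hw
  exact hw.symm

lemma finrank_ge : 364 ≤ Module.finrank ℚ (R3 ⧸ I) := by
  have := indep.fintype_card_le_finrank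
  rwa [card_V] at this

lemma finrank_eq : Module.finrank ℚ (R3 ⧸ I) = 364 :=
  le_antisymm finrank_le finrank_ge


noncomputable def mIdeal : Ideal R3 := Ideal.span {X 0, X 1, X 2}

lemma h7 : (C (1/7 : ℚ) : R3) * 7 = 1 := by
  rw [show (7:R3) = C 7 from (map_ofNat C 7).symm, ← C_mul]
  norm_num

lemma h5 : (C (1/5 : ℚ) : R3) * 5 = 1 := by
  rw [show (5:R3) = C 5 from (map_ofNat C 5).symm, ← C_mul]
  norm_num

lemma span_scaled : Ideal.span {f1, (7:R3) * X 0 * X 1 ^ 6, 5 * X 2 ^ 4} = I := by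
  apply le_antisymm
  · rw [Ideal.span_le]
    rintro p (rfl | rfl | rfl)
    · exact f1_mem
    · show (7:R3) * X 0 * X 1 ^ 6 ∈ I
      rw [mul_assoc]
      exact Ideal.mul_mem_left _ _ f2_mem
    · show (5:R3) * X 2 ^ 4 ∈ I
      exact Ideal.mul_mem_left _ _ f3_mem
  · rw [show I = Ideal.span {f1, f2, f3} from rfl, Ideal.span_le]
    rintro p (rfl | rfl | rfl)
    · exact Ideal.subset_span (by simp)
    · show f2 ∈ _
      have : f2 = C (1/7 : ℚ) * ((7:R3) * X 0 * X 1 ^ 6) := by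
        rw [f2]
        linear_combination (-(X 0 * X 1 ^ 6 : R3)) * h7
      rw [this]
      exact Ideal.mul_mem_left _ _ (Ideal.subset_span (by simp))
    · show f3 ∈ _
      have : f3 = C (1/5 : ℚ) * ((5:R3) * X 2 ^ 4) := by
        rw [f3]
        linear_combination (-(X 2 ^ 4 : R3)) * h5
      rw [this]
      exact Ideal.mul_mem_left _ _ (Ideal.subset_span (by simp))

lemma m_max : mIdeal.IsMaximal := by
  have hker : mIdeal = RingHom.ker (constantCoeff : MvPolynomial (Fin 3) ℚ →+* ℚ) := by
    apply le_antisymm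
    · rw [mIdeal, Ideal.span_le]
      rintro p (rfl | rfl | rfl)
      · rw [SetLike.mem_coe, RingHom.mem_ker]; simp
      · rw [SetLike.mem_coe, RingHom.mem_ker]; simp
      · rw [SetLike.mem_coe, RingHom.mem_ker]; simp
    · intro p hp
      rw [RingHom.mem_ker, constantCoeff_eq] at hp
      have hset : ({X 0, X 1, X 2} : Set R3) = X '' Set.univ := by
        ext q
        constructor
        · rintro (rfl | rfl | rfl)
          · exact ⟨0, Set.mem_univ _, rfl⟩
          · exact ⟨1, Set.mem_univ _, rfl⟩
          · exact ⟨2, Set.mem_univ _, rfl⟩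
        · rintro ⟨i, -, rfl⟩
          fin_cases i <;> simp
      rw [mIdeal, hset, mem_ideal_span_X_image]
      intro mm hmm
      by_contra hno
      push_neg at hno
      have hmm0 : mm = 0 := Finsupp.ext fun i => by
        have := hno i (Set.mem_univ i)
        simpa using this
      rw [hmm0, mem_support_iff] at hmm
      exact hmm hp
  rw [hker]
  exact RingHom.ker_isMaximal_of_surjective _ (fun q => ⟨C q, constantCoeff_C (Fin 3) q⟩)

lemma I_le_m : I ≤ mIdeal := by
  rw [I, Ideal.span_le]
  have h0 : (X 0 : R3) ∈ mIdeal := Ideal.subset_span (by simp)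
  have h1 : (X 1 : R3) ∈ mIdeal := Ideal.subset_span (by simp)
  have h2 : (X 2 : R3) ∈ mIdeal := Ideal.subset_span (by simp)
  rintro p (rfl | rfl | rfl)
  · show f1 ∈ mIdeal
    have : f1 = X 1 ^ 6 * X 1 + 15 * X 0 ^ 13 * X 0 := by rw [f1]; ring
    rw [this]
    exact add_mem (Ideal.mul_mem_left _ _ h1) (Ideal.mul_mem_left _ _ h0)
  · show f2 ∈ mIdeal
    have : f2 = X 1 ^ 6 * X 0 := by rw [f2]; ring
    rw [this]
    exact Ideal.mul_mem_left _ _ h0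
  · show f3 ∈ mIdeal
    have : f3 = X 2 ^ 3 * X 2 := by rw [f3]; ring
    rw [this]
    exact Ideal.mul_mem_left _ _ h2

lemma rad_I : I.radical = mIdeal := by
  apply le_antisymm
  · calc I.radical ≤ mIdeal.radical := Ideal.radical_mono I_le_m
      _ = mIdeal := m_max.isPrime.radical
  · rw [mIdeal, Ideal.span_le]
    rintro p (rfl | rfl | rfl)
    · exact ⟨15, x15_mem⟩
    · exact ⟨13, y13_mem⟩
    · exact ⟨4, f3_mem⟩

lemma I_primary : I.IsPrimary := by
  apply Ideal.isPrimary_of_isMaximal_radical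
  rw [rad_I]
  exact m_max

end BS

open BS in
/-- For `F₀ = z^5 + x y^7 + x^15` in `ℚ[x,y,z]`, the Jacobian ideal
`J(F₀) = (y^7 + 15x^14, 7xy^6, 5z^4)` is `m`-primary and the multiplicity of the
parameter ideal `(y^7 + 15x^14, x y^6, z^4)` (computed, in this homogeneous
system-of-parameters Cohen–Macaulay situation, as the colength) equals `364`. -/
theorem briancon_speder_t_zero_multiplicity
    (F : MvPolynomial (Fin 3) ℚ) (hF : F = X 2 ^ 5 + X 0 * X 1 ^ 7 + X 0 ^ 15)
    (J : Ideal (MvPolynomial (Fin 3) ℚ))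
    (hJ : J = Ideal.span (Set.range fun i : Fin 3 => pderiv i F))
    (m : Ideal (MvPolynomial (Fin 3) ℚ))
    (hm : m = Ideal.span {X 0, X 1, X 2}) :
    J = Ideal.span {X 1 ^ 7 + 15 * X 0 ^ 14,
        (7 : MvPolynomial (Fin 3) ℚ) * X 0 * X 1 ^ 6, 5 * X 2 ^ 4} ∧
    J.IsPrimary ∧ J.radical = m ∧
    Module.finrank ℚ (MvPolynomial (Fin 3) ℚ ⧸
      (Ideal.span {X 1 ^ 7 + 15 * X 0 ^ 14, X 0 * X 1 ^ 6, X 2 ^ 4} :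
        Ideal (MvPolynomial (Fin 3) ℚ))) = 364 := by

  subst hF hJ hm
  have hd0 : pderiv (0 : Fin 3) (X 2 ^ 5 + X 0 * X 1 ^ 7 + X 0 ^ 15 : R3) = f1 := by
    rw [f1]; simp [pderiv_mul, pderiv_pow, pderiv_X]; try ring
  have hd1 : pderiv (1 : Fin 3) (X 2 ^ 5 + X 0 * X 1 ^ 7 + X 0 ^ 15 : R3) =
      (7:R3) * X 0 * X 1 ^ 6 := by
    simp [pderiv_mul, pderiv_pow, pderiv_X]; try ring
  have hd2 : pderiv (2 : Fin 3) (X 2 ^ 5 + X 0 * X 1 ^ 7 + X 0 ^ 15 : R3) =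
      (5:R3) * X 2 ^ 4 := by
    simp [pderiv_mul, pderiv_pow, pderiv_X]; try ring
  have hrange : (Set.range fun i : Fin 3 => pderiv i (X 2 ^ 5 + X 0 * X 1 ^ 7 + X 0 ^ 15 : R3)) =
      {f1, (7:R3) * X 0 * X 1 ^ 6, 5 * X 2 ^ 4} := by
    ext p
    constructor
    · rintro ⟨i, rfl⟩
      fin_cases i
      · exact Or.inl hd0
      · exact Or.inr (Or.inl hd1)
      · exact Or.inr (Or.inr hd2)
    · rintro (rfl | rfl | rfl)
      · exact ⟨0, hd0⟩
      · exact ⟨1, hd1⟩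
      · exact ⟨2, hd2⟩
  refine ⟨?_, ?_, ?_, ?_⟩
  · rw [hrange, f1]
  · rw [hrange, span_scaled]
    exact I_primary
  · rw [hrange, span_scaled, rad_I]
    rfl
  · exact finrank_eq
end

section
/- Let S be an Artinian local ring and R a finitely generated ℕ^r-graded quotient of a polynomial ring S[X_1(0),…,X_1(s_1),…,X_r(0),…,X_r(s_r)] (where the variables X_i(j) have degree e_i, the i-th unit vector), with Hilbert series HS(R, t) = Σ_u λ(R_u) t^u = N(t_1,…,t_r)/∏_{i=1}^r (1−t_i)^{s_i+1} for a polynomial N ∈ ℤ[t_1,…,t_r]. Write the Hilbert polynomial of R as P(u, R) = Σ_{α=0}^{s} c_α ∏_{i=1}^r C(u_i + α_i, α_i). Then c_α = ((−1)^{|s−α|}/∏_i (s_i−α_i)!) · (∂^{|s−α|}N/∂t_1^{s_1−α_1}⋯∂t_r^{s_r−α_r}) evaluated at (1,…,1). -/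
open MvPolynomial

/-- The iterated partial derivative `∂^{|α|}/∂t_1^{α_1}⋯∂t_r^{α_r}`. -/
noncomputable def iterD {r : ℕ} (α : Fin r → ℕ)
    (P : MvPolynomial (Fin r) ℚ) : MvPolynomial (Fin r) ℚ :=
  (List.ofFn fun i : Fin r =>
    (fun Q : MvPolynomial (Fin r) ℚ => pderiv i Q)^[α i]).foldr (· ∘ ·) id P

open Finset in
lemma foldr_comp_apply {β : Type*} (l : List (β → β)) (x : β) :
    l.foldr (· ∘ ·) id x = l.foldr (· <| ·) x := by
  induction l with
  | nil => rfl
  | cons f l ih => simp only [List.foldr_cons, Function.comp_apply, ih]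

lemma pderiv_iterate_monomial {r : ℕ} (i : Fin r) (k : ℕ) (d : Fin r →₀ ℕ) (c : ℚ) :
    (fun Q : MvPolynomial (Fin r) ℚ => pderiv i Q)^[k] (monomial d c) =
      monomial (d - Finsupp.single i k) (c * ((d i).descFactorial k : ℚ)) := by
  induction k with
  | zero => simp
  | succ k ih =>
      rw [Function.iterate_succ_apply', ih, pderiv_monomial]
      have h1 : d - Finsupp.single i k - Finsupp.single i 1 = d - Finsupp.single i (k+1) := by
        ext j
        simp only [Finsupp.tsub_apply, Finsupp.single_apply]
        split_ifs with h <;> omega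
      have h2 : (d - Finsupp.single i k) i = d i - k := by
        simp [Finsupp.tsub_apply]
      rw [h1, h2, Nat.descFactorial_succ]
      congr 1
      push_cast
      ring

lemma foldr_sub_apply {r : ℕ} (l : List (Fin r × ℕ)) (d : Fin r →₀ ℕ) (i : Fin r)
    (hi : i ∉ l.map Prod.fst) :
    (l.foldr (fun p e => e - Finsupp.single p.1 p.2) d) i = d i := by
  induction l with
  | nil => rfl
  | cons p l ih =>
      simp only [List.map_cons, List.mem_cons] at hi
      push_neg at hi
      have hz : Finsupp.single p.1 p.2 i = 0 :=
        Finsupp.single_apply_eq_zero.2 (fun h => absurd h hi.1)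
      simp only [List.foldr_cons, Finsupp.tsub_apply, ih hi.2, hz]
      omega

lemma foldr_pderiv_monomial {r : ℕ} (l : List (Fin r × ℕ)) (d : Fin r →₀ ℕ) (c : ℚ)
    (hl : l.Pairwise fun p q => p.1 ≠ q.1) :
    l.foldr (fun p Q => (fun Q : MvPolynomial (Fin r) ℚ => pderiv p.1 Q)^[p.2] Q)
        (monomial d c) =
      monomial (l.foldr (fun p e => e - Finsupp.single p.1 p.2) d)
        (c * (l.map fun p => ((d p.1).descFactorial p.2 : ℚ)).prod) := by
  induction l with
  | nil => simp
  | cons p l ih =>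
      rw [List.pairwise_cons] at hl
      have hfst : p.1 ∉ l.map Prod.fst := by
        intro h
        obtain ⟨q, hq, hq2⟩ := List.mem_map.1 h
        exact hl.1 q hq hq2.symm
      simp only [List.foldr_cons, ih hl.2, pderiv_iterate_monomial, List.map_cons,
        List.prod_cons, foldr_sub_apply l d p.1 hfst]
      congr 1
      ring

lemma iterD_monomial {r : ℕ} (γ : Fin r → ℕ) (d : Fin r →₀ ℕ) (c : ℚ) :
    iterD γ (monomial d c) =
      monomial ((List.ofFn fun i : Fin r => (i, γ i)).foldr
          (fun p e => e - Finsupp.single p.1 p.2) d)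
        (c * ∏ i : Fin r, ((d i).descFactorial (γ i) : ℚ)) := by
  have hmap : (List.ofFn fun i : Fin r => (fun Q : MvPolynomial (Fin r) ℚ => pderiv i Q)^[γ i])
      = (List.ofFn fun i : Fin r => (i, γ i)).map
          (fun p : Fin r × ℕ => (fun Q : MvPolynomial (Fin r) ℚ => pderiv p.1 Q)^[p.2]) := by
    rw [List.map_ofFn]; rfl
  rw [iterD, hmap, foldr_comp_apply, List.foldr_map]
  rw [foldr_pderiv_monomial]
  · congr 1
    rw [List.map_ofFn]
    have : ((fun p : Fin r × ℕ => ((d p.1).descFactorial p.2 : ℚ)) ∘ fun i : Fin r => (i, γ i))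
        = fun i : Fin r => ((d i).descFactorial (γ i) : ℚ) := rfl
    rw [this, List.prod_ofFn]
  · rw [List.pairwise_ofFn]
    intro i j hij
    exact fun h => absurd h (Fin.ne_of_lt hij)

lemma foldr_apply_add {β : Type*} [AddCommMonoid β] (l : List (β → β))
    (hl : ∀ f ∈ l, ∀ a b : β, f (a + b) = f a + f b) (P Q : β) :
    l.foldr (· <| ·) (P + Q) = l.foldr (· <| ·) P + l.foldr (· <| ·) Q := by
  induction l with
  | nil => rfl
  | cons f l ih =>
      simp only [List.foldr_cons]
      rw [ih (fun g hg => hl g (List.mem_cons_of_mem f hg)),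
        hl f List.mem_cons_self]

lemma pderiv_iterate_add {r : ℕ} (i : Fin r) (k : ℕ) (P Q : MvPolynomial (Fin r) ℚ) :
    (fun Q : MvPolynomial (Fin r) ℚ => pderiv i Q)^[k] (P + Q) =
      (fun Q : MvPolynomial (Fin r) ℚ => pderiv i Q)^[k] P +
      (fun Q : MvPolynomial (Fin r) ℚ => pderiv i Q)^[k] Q := by
  induction k generalizing P Q with
  | zero => rfl
  | succ k ih =>
      rw [Function.iterate_succ_apply, Function.iterate_succ_apply,
        Function.iterate_succ_apply]
      show (fun Q : MvPolynomial (Fin r) ℚ => pderiv i Q)^[k] (pderiv i (P + Q)) = _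
      rw [map_add, ih]

lemma iterD_add {r : ℕ} (γ : Fin r → ℕ) (P Q : MvPolynomial (Fin r) ℚ) :
    iterD γ (P + Q) = iterD γ P + iterD γ Q := by
  unfold iterD
  rw [foldr_comp_apply, foldr_comp_apply, foldr_comp_apply]
  apply foldr_apply_add
  intro f hf a b
  rw [List.mem_ofFn] at hf
  obtain ⟨i, rfl⟩ := hf
  exact pderiv_iterate_add i (γ i) a b

lemma iterD_zero {r : ℕ} (γ : Fin r → ℕ) : iterD γ (0 : MvPolynomial (Fin r) ℚ) = 0 := by
  have h := iterD_add γ 0 0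
  rw [add_zero] at h
  have := congrArg (fun x => x - iterD γ 0) h
  simpa using this.symm

lemma iterD_sum {r : ℕ} {ι : Type*} (γ : Fin r → ℕ) (F : Finset ι)
    (f : ι → MvPolynomial (Fin r) ℚ) :
    iterD γ (∑ d ∈ F, f d) = ∑ d ∈ F, iterD γ (f d) := by
  classical
  induction F using Finset.induction with
  | empty => simpa using iterD_zero γ
  | insert _ _ h ih =>
      rw [Finset.sum_insert h, Finset.sum_insert h, iterD_add, ih]

lemma eval1_iterD {r : ℕ} (γ : Fin r → ℕ) (P : MvPolynomial (Fin r) ℚ) :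
    eval (fun _ => (1 : ℚ)) (iterD γ P) =
      ∑ d ∈ P.support, coeff d P * ∏ i : Fin r, ((d i).descFactorial (γ i) : ℚ) := by
  conv_lhs => rw [← P.support_sum_monomial_coeff]
  rw [iterD_sum, map_sum]
  apply Finset.sum_congr rfl
  intro d _
  rw [iterD_monomial, eval_monomial]
  simp [Finsupp.prod]
open Finset

lemma pascal_sum (N : ℕ) (f : ℕ → ℚ) :
    ∑ k ∈ range (N+2), (-1:ℚ)^k * ((N+1).choose k) * f k
      = ∑ k ∈ range (N+1), (-1:ℚ)^k * (N.choose k) * f k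
        - ∑ k ∈ range (N+1), (-1:ℚ)^k * (N.choose k) * f (k+1) := by
  rw [Finset.sum_range_succ' (fun k => (-1:ℚ)^k * ((N+1).choose k) * f k) (N+1)]
  have step : ∀ i, (-1:ℚ)^(i+1) * ((N+1).choose (i+1)) * f (i+1)
      = -((-1:ℚ)^i * (N.choose i) * f (i+1)) - ((-1:ℚ)^i * (N.choose (i+1)) * f (i+1)) := by
    intro i
    have : ((N+1).choose (i+1) : ℚ) = (N.choose i : ℚ) + (N.choose (i+1) : ℚ) := by
      rw [Nat.choose_succ_succ]; push_cast; ring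
    rw [this]; ring
  rw [Finset.sum_congr rfl (fun i _ => step i), Finset.sum_sub_distrib, Finset.sum_neg_distrib]
  have hB' : ∑ i ∈ range (N+1), (-1:ℚ)^i * ((N.choose (i+1) : ℕ) : ℚ) * f (i+1)
      = f 0 - ∑ k ∈ range (N+1), (-1:ℚ)^k * (N.choose k) * f k := by
    rw [Finset.sum_range_succ (fun i => (-1:ℚ)^i * (N.choose (i+1)) * f (i+1)) N,
      Nat.choose_succ_self,
      Finset.sum_range_succ' (fun k => (-1:ℚ)^k * (N.choose k) * f k) N]
    have e1 : ∑ i ∈ range N, (-1:ℚ)^(i+1) * (N.choose (i+1)) * f (i+1)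
        = -∑ i ∈ range N, (-1:ℚ)^i * (N.choose (i+1)) * f (i+1) := by
      rw [← Finset.sum_neg_distrib]
      exact Finset.sum_congr rfl fun i _ => by ring
    rw [e1]
    simp
  rw [hB']
  simp
  ring

lemma alt_sum_choose_shift : ∀ (N m x : ℕ), m < N →
    ∑ k ∈ range (N+1), (-1:ℚ)^k * (N.choose k) * ((x+k).choose m) = 0 := by
  intro N
  induction N with
  | zero => intro m x h; omega
  | succ N ih =>
      intro m x h
      rw [show N + 1 + 1 = N + 2 from rfl,
        pascal_sum N (fun k => (((x+k).choose m : ℕ) : ℚ))]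
      rcases m with _ | m'
      · rw [sub_eq_zero]
        apply Finset.sum_congr rfl
        intro k _
        simp
      · have : ∀ k, (-1:ℚ)^k * (N.choose k) * ((x+(k+1)).choose (m'+1))
            = (-1:ℚ)^k * (N.choose k) * ((x+k).choose m')
              + (-1:ℚ)^k * (N.choose k) * ((x+k).choose (m'+1)) := by
          intro k
          have : ((x + (k+1)).choose (m'+1) : ℚ)
              = ((x+k).choose m' : ℚ) + ((x+k).choose (m'+1) : ℚ) := by
            rw [show x + (k+1) = (x+k) + 1 from rfl, Nat.choose_succ_succ]
            push_cast; ring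
          rw [this]; ring
        have hB : ∑ k ∈ range (N+1), (-1:ℚ)^k * (N.choose k) * ((x+(k+1)).choose (m'+1))
            = (∑ k ∈ range (N+1), (-1:ℚ)^k * (N.choose k) * ((x+k).choose m'))
              + ∑ k ∈ range (N+1), (-1:ℚ)^k * (N.choose k) * ((x+k).choose (m'+1)) := by
          rw [← Finset.sum_add_distrib]
          exact Finset.sum_congr rfl (fun k _ => this k)
        rw [hB, ih m' x (by omega)]
        ring

lemma alt_sum_choose_choose : ∀ (m γ : ℕ),
    ∑ y ∈ range (m+1), (-1:ℚ)^y * (m.choose y) * (y.choose γ)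
      = if γ = m then (-1:ℚ)^m else 0 := by
  intro m
  induction m with
  | zero =>
      intro γ
      rcases γ with _ | γ' <;> simp
  | succ m ih =>
      intro γ
      rw [show m + 1 + 1 = m + 2 from rfl,
        pascal_sum m (fun y => ((y.choose γ : ℕ) : ℚ))]
      rcases γ with _ | γ'
      · simp
      · have : ∀ y, (-1:ℚ)^y * (m.choose y) * ((y+1).choose (γ'+1))
            = (-1:ℚ)^y * (m.choose y) * (y.choose γ')
              + (-1:ℚ)^y * (m.choose y) * (y.choose (γ'+1)) := by
          intro y
          rw [show ((y+1).choose (γ'+1) : ℚ) = (y.choose γ' : ℚ) + (y.choose (γ'+1) : ℚ) by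
            rw [Nat.choose_succ_succ]; push_cast; ring]
          ring
        rw [Finset.sum_congr rfl (fun y _ => this y), Finset.sum_add_distrib, ih γ', ih (γ'+1)]
        by_cases hg : γ' = m
        · subst hg
          simp [pow_succ]
        · have : ¬ (γ' + 1 = m + 1) := by omega
          simp [hg, this]

lemma coeff_one_sub_X_pow (m k : ℕ) :
    PowerSeries.coeff k ((1 - PowerSeries.X)^m) = (-1:ℚ)^k * (m.choose k) := by
  have h : (1 - PowerSeries.X : PowerSeries ℚ) = (-PowerSeries.X) + 1 := by ring
  rw [h, add_pow]
  rw [map_sum]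
  have hterm : ∀ j, PowerSeries.coeff k ((-PowerSeries.X : PowerSeries ℚ)^j * 1^(m-j) * (m.choose j : PowerSeries ℚ))
      = (if k = j then (-1:ℚ)^j * (m.choose j) else 0) := by
    intro j
    rw [one_pow, mul_one, neg_pow]
    have hC : ((-1 : PowerSeries ℚ)^j * PowerSeries.X ^ j * (m.choose j : PowerSeries ℚ))
        = PowerSeries.C ((-1:ℚ)^j * (m.choose j)) * PowerSeries.X ^ j := by
      rw [map_mul, map_pow, map_neg, map_one, map_natCast]; ring
    rw [hC, PowerSeries.coeff_C_mul, PowerSeries.coeff_X_pow]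
    simp [mul_ite]
  rw [Finset.sum_congr rfl (fun j _ => hterm j)]
  rw [Finset.sum_ite_eq (range (m+1)) k (fun j => (-1:ℚ)^j * (m.choose j))]
  by_cases hk : k ∈ range (m+1)
  · simp [hk]
  · simp only [hk, if_false]
    rw [Nat.choose_eq_zero_of_lt (by simpa using hk)]
    simp

lemma mk_choose_mul (b m : ℕ) (h : b < m) :
    (PowerSeries.mk fun x => ((x + b).choose b : ℚ)) * (1 - PowerSeries.X)^m
      = (1 - PowerSeries.X)^(m - b - 1) := by
  have h1 : (PowerSeries.mk fun x => ((x+b).choose b : ℚ))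
      = (PowerSeries.invOneSubPow ℚ (b+1)).val := by
    rw [PowerSeries.invOneSubPow_val_succ_eq_mk_add_choose]
    ext n
    rw [PowerSeries.coeff_mk, PowerSeries.coeff_mk, add_comm b n]
  have h2 : (1 - PowerSeries.X : PowerSeries ℚ)^m = (1-PowerSeries.X)^(b+1) * (1-PowerSeries.X)^(m-b-1) := by
    rw [← pow_add]
    congr 1
    omega
  rw [h1, h2, ← mul_assoc, ← PowerSeries.invOneSubPow_inv_eq_one_sub_pow,
    (PowerSeries.invOneSubPow ℚ (b+1)).val_inv, one_mul]

lemma B_eval (b n y : ℕ) (h : b ≤ n) :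
    ∑ p ∈ Finset.HasAntidiagonal.antidiagonal y, ((p.1 + b).choose b : ℚ) * ((-1:ℚ)^p.2 * (((n+1).choose p.2 : ℕ) : ℚ))
      = (-1:ℚ)^y * (((n - b).choose y : ℕ) : ℚ) := by
  have key := congrArg (PowerSeries.coeff y) (mk_choose_mul b (n+1) (by omega))
  rw [PowerSeries.coeff_mul] at key
  have hnb : n + 1 - b - 1 = n - b := by omega
  rw [hnb, coeff_one_sub_X_pow] at key
  rw [← key]
  apply Finset.sum_congr rfl
  intro p _
  rw [PowerSeries.coeff_mk, coeff_one_sub_X_pow]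

noncomputable def g1 (n γ T0 x : ℕ) : ℚ :=
  ∑ k ∈ range (n+2), if x + k < T0 then
    (-1:ℚ)^k * (((n+1).choose k : ℕ):ℚ) * (((x+k).descFactorial γ : ℕ):ℚ) else 0

lemma g1_eq_zero (n γ T0 x : ℕ) (hγ : γ ≤ n) (hx : x + n + 1 < T0) :
    g1 n γ T0 x = 0 := by
  unfold g1
  have h1 : ∀ k ∈ range (n+2), (if x + k < T0 then
      (-1:ℚ)^k * (((n+1).choose k : ℕ):ℚ) * (((x+k).descFactorial γ : ℕ):ℚ) else 0)
      = (γ.factorial : ℚ) * ((-1:ℚ)^k * (((n+1).choose k : ℕ):ℚ) * (((x+k).choose γ : ℕ):ℚ)) := by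
    intro k hk
    rw [Finset.mem_range] at hk
    rw [if_pos (by omega), Nat.descFactorial_eq_factorial_mul_choose]
    push_cast
    ring
  rw [Finset.sum_congr rfl h1, ← Finset.mul_sum,
    show n + 2 = (n+1) + 1 from rfl, alt_sum_choose_shift (n+1) γ x (by omega), mul_zero]

lemma D1b (n γ b T0 : ℕ) (hγ : γ ≤ n) (hb : b ≤ n) (hT : n + 1 < T0) :
    ∑ x ∈ range T0, (((x+b).choose b : ℕ):ℚ) * g1 n γ T0 x
      = if b + γ = n then (-1:ℚ)^γ * (γ.factorial : ℚ) else 0 := by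
  unfold g1
  -- step 1: push the factor inside
  have h1 : ∀ x, (((x+b).choose b : ℕ):ℚ) * (∑ k ∈ range (n+2), if x + k < T0 then
        (-1:ℚ)^k * (((n+1).choose k : ℕ):ℚ) * (((x+k).descFactorial γ : ℕ):ℚ) else 0)
      = ∑ k ∈ range T0, (if x + k < T0 then
        (((x+b).choose b : ℕ):ℚ) * ((-1:ℚ)^k * (((n+1).choose k : ℕ):ℚ) * (((x+k).descFactorial γ : ℕ):ℚ)) else 0) := by
    intro x
    rw [Finset.mul_sum]
    rw [Finset.sum_subset (Finset.range_subset_range.2 (show n+2 ≤ T0 by omega))]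
    · exact Finset.sum_congr rfl (fun k _ => by rw [mul_ite, mul_zero])
    · intro k _ hk
      rw [Finset.mem_range, not_lt] at hk
      rw [show (n+1).choose k = 0 from Nat.choose_eq_zero_of_lt (by omega)]
      simp
  rw [Finset.sum_congr rfl (fun x _ => h1 x)]
  -- step 2: product set and filter
  rw [← Finset.sum_product']
  rw [← Finset.sum_filter (fun p : ℕ × ℕ => p.1 + p.2 < T0)
    (fun p : ℕ × ℕ => (((p.1+b).choose b : ℕ):ℚ) * ((-1:ℚ)^p.2 * (((n+1).choose p.2 : ℕ):ℚ) * (((p.1+p.2).descFactorial γ : ℕ):ℚ)))]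
  -- step 3: bijection to sigma of antidiagonals
  rw [Finset.sum_nbij' (i := fun p : ℕ × ℕ => (⟨p.1 + p.2, p⟩ : Σ _ : ℕ, ℕ × ℕ))
    (j := fun q : Σ _ : ℕ, ℕ × ℕ => q.2)
    (t := (range T0).sigma (fun y => Finset.HasAntidiagonal.antidiagonal y))
    (g := fun q : Σ _ : ℕ, ℕ × ℕ =>
      (((q.2.1+b).choose b : ℕ):ℚ) * ((-1:ℚ)^q.2.2 * (((n+1).choose q.2.2 : ℕ):ℚ) * (((q.1).descFactorial γ : ℕ):ℚ)))]
  · -- now a sigma sum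
    rw [Finset.sum_sigma]
    have hinner : ∀ y ∈ range T0, ∑ q ∈ Finset.HasAntidiagonal.antidiagonal y,
        (((q.1+b).choose b : ℕ):ℚ) * ((-1:ℚ)^q.2 * (((n+1).choose q.2 : ℕ):ℚ) * ((y.descFactorial γ : ℕ):ℚ))
        = ((γ.factorial : ℕ):ℚ) * ((-1:ℚ)^y * (((n - b).choose y : ℕ):ℚ) * ((y.choose γ : ℕ):ℚ)) := by
      intro y _
      have : ∀ q : ℕ × ℕ, (((q.1+b).choose b : ℕ):ℚ) * ((-1:ℚ)^q.2 * (((n+1).choose q.2 : ℕ):ℚ) * ((y.descFactorial γ : ℕ):ℚ))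
          = ((((q.1 + b).choose b : ℕ):ℚ) * ((-1:ℚ)^q.2 * (((n+1).choose q.2 : ℕ):ℚ))) * ((y.descFactorial γ : ℕ):ℚ) := by
        intro q; ring
      rw [Finset.sum_congr rfl (fun q _ => this q), ← Finset.sum_mul, B_eval b n y hb,
        Nat.descFactorial_eq_factorial_mul_choose]
      push_cast
      ring
    rw [Finset.sum_congr rfl hinner, ← Finset.mul_sum]
    -- step 4: shrink and apply the last identity
    have hshrink : ∑ y ∈ range T0, (-1:ℚ)^y * (((n - b).choose y : ℕ):ℚ) * ((y.choose γ : ℕ):ℚ)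
        = ∑ y ∈ range ((n-b)+1), (-1:ℚ)^y * (((n - b).choose y : ℕ):ℚ) * ((y.choose γ : ℕ):ℚ) := by
      rw [Finset.sum_subset (Finset.range_subset_range.2 (show (n-b)+1 ≤ T0 by omega))]
      intro y _ hy
      rw [Finset.mem_range, not_lt] at hy
      rw [show (n-b).choose y = 0 from Nat.choose_eq_zero_of_lt (by omega)]
      simp
    rw [hshrink, alt_sum_choose_choose (n-b) γ]
    by_cases hcase : b + γ = n
    · have hg : γ = n - b := by omega
      rw [if_pos hg, if_pos hcase, ← hg]
      push_cast
      ring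
    · have hg : ¬ (γ = n - b) := by omega
      rw [if_neg hg, if_neg hcase, mul_zero]
  · -- i maps into t
    intro p hp
    rw [Finset.mem_filter] at hp
    rw [Finset.mem_sigma]
    exact ⟨Finset.mem_range.2 hp.2, Finset.HasAntidiagonal.mem_antidiagonal.2 rfl⟩
  · -- j maps into s
    intro q hq
    rw [Finset.mem_sigma, Finset.mem_range, Finset.HasAntidiagonal.mem_antidiagonal] at hq
    rw [Finset.mem_filter, Finset.mem_product, Finset.mem_range, Finset.mem_range]
    omega
  · intro p _; rfl
  · intro q hq
    rw [Finset.mem_sigma, Finset.HasAntidiagonal.mem_antidiagonal] at hq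
    exact Sigma.ext hq.2 (heq_of_eq rfl)
  · intro p hp
    rfl
section Multivariate
variable {r : ℕ}

lemma prod_monomial_ps (F : Finset (Fin r)) (a : Fin r → (Fin r →₀ ℕ)) (m : Fin r → ℚ) :
    ∏ i ∈ F, (MvPowerSeries.monomial (a i)) (m i)
      = MvPowerSeries.monomial (∑ i ∈ F, a i) (∏ i ∈ F, m i) := by
  classical
  induction F using Finset.induction with
  | empty => simp
  | @insert j F hj ih =>
      rw [Finset.prod_insert hj, ih, MvPowerSeries.monomial_mul_monomial,
        Finset.sum_insert hj, Finset.prod_insert hj]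

lemma sum_single_eq_symm (e : Fin r → ℕ) :
    ∑ i : Fin r, Finsupp.single i (e i) = Finsupp.equivFunOnFinite.symm e := by
  ext j
  rw [Finsupp.finset_sum_apply, Finsupp.coe_equivFunOnFinite_symm]
  rw [Finset.sum_eq_single j]
  · rw [Finsupp.single_eq_same]
  · intro i _ hne
    exact Finsupp.single_eq_of_ne hne.symm
  · intro h
    exact absurd (Finset.mem_univ j) h

lemma one_sub_X_pow_ps (i : Fin r) (n : ℕ) :
    (1 - MvPowerSeries.X i : MvPowerSeries (Fin r) ℚ)^(n + 1)
      = ∑ k ∈ Finset.range (n + 2), (MvPowerSeries.monomial (Finsupp.single i k))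
          ((-1:ℚ)^k * (((n + 1).choose k : ℕ) : ℚ)) := by
  have h : (1 - MvPowerSeries.X i : MvPowerSeries (Fin r) ℚ) = (-MvPowerSeries.X i) + 1 := by
    ring
  rw [h, add_pow]
  apply Finset.sum_congr rfl
  intro k _
  rw [one_pow, mul_one, neg_pow, MvPowerSeries.X_pow_eq]
  have hc : ((n+1).choose k : MvPowerSeries (Fin r) ℚ)
      = (MvPowerSeries.monomial 0) (((n+1).choose k : ℕ) : ℚ) := by
    rw [MvPowerSeries.monomial_zero_eq_C_apply]
    exact (map_natCast (MvPowerSeries.C (σ := Fin r) (R := ℚ)) _).symm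
  have hneg : ((-1 : MvPowerSeries (Fin r) ℚ))^k
      = (MvPowerSeries.monomial 0) ((-1:ℚ)^k) := by
    rw [MvPowerSeries.monomial_zero_eq_C_apply, map_pow, map_neg, map_one]
  rw [hc, hneg, MvPowerSeries.monomial_mul_monomial, MvPowerSeries.monomial_mul_monomial]
  simp

lemma prod_one_sub_X_pow (s : Fin r → ℕ) :
    ∏ i : Fin r, (1 - MvPowerSeries.X i : MvPowerSeries (Fin r) ℚ)^(s i + 1)
      = ∑ e ∈ Fintype.piFinset (fun i : Fin r => Finset.range (s i + 2)),
          (MvPowerSeries.monomial (Finsupp.equivFunOnFinite.symm e))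
            (∏ i : Fin r, ((-1:ℚ)^(e i) * (((s i + 1).choose (e i) : ℕ) : ℚ))) := by
  rw [Finset.prod_congr rfl (fun i _ => one_sub_X_pow_ps i (s i)), Finset.prod_univ_sum]
  apply Finset.sum_congr rfl
  intro e _
  rw [prod_monomial_ps, sum_single_eq_symm]

end Multivariate

section Coeff
variable {r : ℕ}

lemma antidiag_pick (d e : Fin r →₀ ℕ) (f : (Fin r →₀ ℕ) → ℚ) (cst : ℚ) :
    ∑ p ∈ Finset.HasAntidiagonal.antidiagonal d, f p.1 * (if p.2 = e then cst else 0)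
      = if e ≤ d then f (d - e) * cst else 0 := by
  by_cases h : e ≤ d
  · rw [if_pos h]
    rw [Finset.sum_eq_single ((d - e, e) : (Fin r →₀ ℕ) × (Fin r →₀ ℕ))]
    · rw [if_pos rfl]
    · intro p hp hne
      rw [Finset.HasAntidiagonal.mem_antidiagonal] at hp
      by_cases h2 : p.2 = e
      · exfalso
        apply hne
        have : p.1 = d - e := by
          apply eq_tsub_of_add_eq
          rw [← h2]; exact hp
        rw [Prod.ext_iff]
        exact ⟨this, h2⟩
      · rw [if_neg h2, mul_zero]
    · intro hnot
      exact absurd (Finset.HasAntidiagonal.mem_antidiagonal.2 (tsub_add_cancel_of_le h)) hnot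
  · rw [if_neg h]
    apply Finset.sum_eq_zero
    intro p hp
    rw [Finset.HasAntidiagonal.mem_antidiagonal] at hp
    by_cases h2 : p.2 = e
    · exfalso
      apply h
      rw [← hp, ← h2]
      exact le_add_self
    · rw [if_neg h2, mul_zero]

lemma coeff_Nq (s : Fin r → ℕ) (H : (Fin r → ℕ) → ℕ)
    (Nq : MvPolynomial (Fin r) ℚ) (Hs : MvPowerSeries (Fin r) ℚ)
    (hHs : ∀ d : Fin r →₀ ℕ, MvPowerSeries.coeff d Hs = (H fun i => d i : ℚ))
    (hseries : Hs * ∏ i, (1 - MvPowerSeries.X i) ^ (s i + 1)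
      = (Nq : MvPowerSeries (Fin r) ℚ)) (d : Fin r →₀ ℕ) :
    MvPolynomial.coeff d Nq
      = ∑ e ∈ Fintype.piFinset (fun i : Fin r => Finset.range (s i + 2)),
          if Finsupp.equivFunOnFinite.symm e ≤ d then
            (∏ i : Fin r, ((-1:ℚ)^(e i) * (((s i + 1).choose (e i) : ℕ) : ℚ)))
              * (H fun i => d i - e i : ℚ) else 0 := by
  rw [← MvPolynomial.coeff_coe, ← hseries, prod_one_sub_X_pow, MvPowerSeries.coeff_mul]
  have hstep : ∀ p : (Fin r →₀ ℕ) × (Fin r →₀ ℕ),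
      MvPowerSeries.coeff p.1 Hs *
        MvPowerSeries.coeff p.2 (∑ e ∈ Fintype.piFinset (fun i : Fin r => Finset.range (s i + 2)),
          (MvPowerSeries.monomial (Finsupp.equivFunOnFinite.symm e))
            (∏ i : Fin r, ((-1:ℚ)^(e i) * (((s i + 1).choose (e i) : ℕ) : ℚ))))
      = ∑ e ∈ Fintype.piFinset (fun i : Fin r => Finset.range (s i + 2)),
          (H fun i => p.1 i : ℚ) * (if p.2 = Finsupp.equivFunOnFinite.symm e then
            (∏ i : Fin r, ((-1:ℚ)^(e i) * (((s i + 1).choose (e i) : ℕ) : ℚ))) else 0) := by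
    intro p
    rw [map_sum, Finset.mul_sum, hHs]
    apply Finset.sum_congr rfl
    intro e _
    rw [MvPowerSeries.coeff_monomial]
  rw [Finset.sum_congr rfl (fun p _ => hstep p), Finset.sum_comm]
  apply Finset.sum_congr rfl
  intro e _
  rw [antidiag_pick d (Finsupp.equivFunOnFinite.symm e)
    (fun u => (H fun i => u i : ℚ)) _]
  by_cases h : Finsupp.equivFunOnFinite.symm e ≤ d
  · rw [if_pos h, if_pos h, mul_comm]
    have harg : (fun i => ((d - Finsupp.equivFunOnFinite.symm e) i)) = (fun i => d i - e i) := by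
      funext i
      rw [Finsupp.tsub_apply, Finsupp.coe_equivFunOnFinite_symm]
    rw [harg]
  · rw [if_neg h, if_neg h]

end Coeff

lemma prod_ite_zero' {ι : Type*} [Fintype ι] (p : ι → Prop) [DecidablePred p] (f : ι → ℚ) :
    (∏ i : ι, if p i then f i else 0) = if (∀ i, p i) then ∏ i : ι, f i else 0 := by
  by_cases h : ∀ i, p i
  · rw [if_pos h]
    exact Finset.prod_congr rfl fun i _ => if_pos (h i)
  · rw [if_neg h]
    push_neg at h
    obtain ⟨i0, hi0⟩ := h
    exact Finset.prod_eq_zero (Finset.mem_univ i0) (if_neg hi0)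

lemma support_coord_le {r : ℕ} (Nq : MvPolynomial (Fin r) ℚ) (d : Fin r →₀ ℕ)
    (hd : d ∈ Nq.support) (i : Fin r) : d i ≤ Nq.totalDegree := by
  have h1 : d i ≤ d.sum (fun _ n => n) := by
    by_cases h : d i = 0
    · rw [h]; exact Nat.zero_le _
    · exact Finset.single_le_sum (fun j _ => Nat.zero_le _) (Finsupp.mem_support_iff.2 h)
  exact le_trans h1 (MvPolynomial.le_totalDegree hd)

/-- If the Hilbert function `H u = λ(R_u)` of a multigraded algebra has Hilbert series
`Σ_u H(u) t^u = N(t)/∏_i (1−t_i)^{s_i+1}` and Hilbert polynomial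
`P(u) = Σ_{α ≤ s} c_α ∏_i C(u_i+α_i, α_i)`, then
`c_α = ((−1)^{|s−α|}/∏_i (s_i−α_i)!) · (∂^{|s−α|}N/∂t^{s−α})|_{t=(1,…,1)}`. -/
theorem hilbert_polynomial_coefficients {r : ℕ} (s : Fin r → ℕ)
    (H : (Fin r → ℕ) → ℕ)
    (N : MvPolynomial (Fin r) ℤ)
    (Nq : MvPolynomial (Fin r) ℚ) (hNq : Nq = N.map (Int.castRingHom ℚ))
    (Hs : MvPowerSeries (Fin r) ℚ)
    (hHs : ∀ d : Fin r →₀ ℕ, MvPowerSeries.coeff d Hs = (H fun i => d i : ℚ))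
    (hseries : Hs * ∏ i, (1 - MvPowerSeries.X i) ^ (s i + 1)
      = (Nq : MvPowerSeries (Fin r) ℚ))
    (c : (Fin r → ℕ) → ℚ)
    (hpoly : ∃ M : ℕ, ∀ u : Fin r → ℕ, (∀ i, M ≤ u i) →
      (H u : ℚ) = ∑ α ∈ Fintype.piFinset (fun i : Fin r => Finset.range (s i + 1)),
        c α * ∏ i, ((u i + α i).choose (α i) : ℚ)) :
    ∀ α ∈ Fintype.piFinset (fun i : Fin r => Finset.range (s i + 1)),
      c α = ((-1 : ℚ) ^ (∑ i, (s i - α i)) / ∏ i, ((s i - α i).factorial : ℚ)) *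
        eval (fun _ => (1 : ℚ)) (iterD (fun i => s i - α i) Nq) := by
  classical
  intro α hα
  obtain ⟨M, hM⟩ := hpoly
  have hαs : ∀ i, α i ≤ s i := by
    intro i
    have := (Fintype.mem_piFinset.1 hα) i
    rw [Finset.mem_range] at this
    omega
  set T0 : ℕ := Nq.totalDegree + (M + (∑ i, s i) + 2) with hT0def
  have hT0s : ∀ i, M + s i + 1 < T0 := by
    intro i
    have := Finset.single_le_sum (f := s) (fun j _ => Nat.zero_le _) (Finset.mem_univ i)
    omega
  have hsupp : ∀ d ∈ Nq.support, ∀ i, d i < T0 := by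
    intro d hd i
    have := support_coord_le Nq d hd i
    omega
  -- Step 1 : express the evaluated derivative as a sum over the box
  have hstep1 : eval (fun _ => (1:ℚ)) (iterD (fun i => s i - α i) Nq)
      = ∑ u ∈ Fintype.piFinset (fun _ : Fin r => Finset.range T0),
          MvPolynomial.coeff (Finsupp.equivFunOnFinite.symm u) Nq
            * ∏ i, ((u i).descFactorial (s i - α i) : ℚ) := by
    rw [eval1_iterD]
    have hsub : Nq.support ⊆ (Fintype.piFinset (fun _ : Fin r => Finset.range T0)).image
        (Finsupp.equivFunOnFinite.symm) := by
      intro d hd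
      rw [Finset.mem_image]
      refine ⟨Finsupp.equivFunOnFinite d, ?_, ?_⟩
      · rw [Fintype.mem_piFinset]
        intro i
        rw [Finset.mem_range]
        exact hsupp d hd i
      · exact Finsupp.equivFunOnFinite.symm_apply_apply d
    rw [Finset.sum_subset hsub]
    · rw [Finset.sum_image (fun u _ v _ h => Finsupp.equivFunOnFinite.symm.injective h)]
      apply Finset.sum_congr rfl
      intro u _
      simp only [Finsupp.coe_equivFunOnFinite_symm]
    · intro d _ hd
      rw [MvPolynomial.notMem_support_iff.1 hd, zero_mul]
  -- Step 2 : substitute the coefficient formula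
  have hstep2 : ∀ u : Fin r → ℕ,
      MvPolynomial.coeff (Finsupp.equivFunOnFinite.symm u) Nq
          * ∏ i, ((u i).descFactorial (s i - α i) : ℚ)
      = ∑ e ∈ Fintype.piFinset (fun i : Fin r => Finset.range (s i + 2)),
          (if (∀ i, e i ≤ u i) then
            (∏ i, ((-1:ℚ)^(e i) * (((s i + 1).choose (e i) : ℕ) : ℚ)))
              * (H fun i => u i - e i : ℚ)
              * ∏ i, ((u i).descFactorial (s i - α i) : ℚ) else 0) := by
    intro u
    rw [coeff_Nq s H Nq Hs hHs hseries, Finset.sum_mul]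
    apply Finset.sum_congr rfl
    intro e _
    have hle : (Finsupp.equivFunOnFinite.symm e ≤ Finsupp.equivFunOnFinite.symm u)
        ↔ (∀ i, e i ≤ u i) := by
      rw [Finsupp.le_def]
      constructor
      · intro h i
        have := h i
        rwa [Finsupp.coe_equivFunOnFinite_symm,
          Finsupp.coe_equivFunOnFinite_symm] at this
      · intro h i
        rw [Finsupp.coe_equivFunOnFinite_symm,
          Finsupp.coe_equivFunOnFinite_symm]
        exact h i
    have harg : (fun i => (Finsupp.equivFunOnFinite.symm u) i - e i) = fun i => u i - e i := by
      funext i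
      rw [Finsupp.coe_equivFunOnFinite_symm]
    rw [harg, ite_mul, zero_mul]
    by_cases h : ∀ i, e i ≤ u i
    · rw [if_pos h, if_pos (hle.2 h)]
    · rw [if_neg h, if_neg (fun hc => h (hle.1 hc))]
  -- Step 3 : reindex pairs (u, e) -> (v, e) with v = u - e
  have hstep3 :
      (∑ u ∈ Fintype.piFinset (fun _ : Fin r => Finset.range T0),
        ∑ e ∈ Fintype.piFinset (fun i : Fin r => Finset.range (s i + 2)),
          (if (∀ i, e i ≤ u i) then
            (∏ i, ((-1:ℚ)^(e i) * (((s i + 1).choose (e i) : ℕ) : ℚ)))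
              * (H fun i => u i - e i : ℚ)
              * ∏ i, ((u i).descFactorial (s i - α i) : ℚ) else 0))
      = ∑ v ∈ Fintype.piFinset (fun _ : Fin r => Finset.range T0),
          (H v : ℚ) * ∑ e ∈ Fintype.piFinset (fun i : Fin r => Finset.range (s i + 2)),
            (if (∀ i, v i + e i < T0) then
              (∏ i, ((-1:ℚ)^(e i) * (((s i + 1).choose (e i) : ℕ) : ℚ)))
                * ∏ i, (((v i + e i).descFactorial (s i - α i) : ℕ) : ℚ) else 0) := by
    have hR : ∀ v : Fin r → ℕ, (H v : ℚ) *
        (∑ e ∈ Fintype.piFinset (fun i : Fin r => Finset.range (s i + 2)),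
          (if (∀ i, v i + e i < T0) then
            (∏ i, ((-1:ℚ)^(e i) * (((s i + 1).choose (e i) : ℕ) : ℚ)))
              * ∏ i, (((v i + e i).descFactorial (s i - α i) : ℕ) : ℚ) else 0))
        = ∑ e ∈ Fintype.piFinset (fun i : Fin r => Finset.range (s i + 2)),
          (if (∀ i, v i + e i < T0) then
            (H v : ℚ) * ((∏ i, ((-1:ℚ)^(e i) * (((s i + 1).choose (e i) : ℕ) : ℚ)))
              * ∏ i, (((v i + e i).descFactorial (s i - α i) : ℕ) : ℚ)) else 0) := by
      intro v
      rw [Finset.mul_sum]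
      exact Finset.sum_congr rfl fun e _ => by rw [mul_ite, mul_zero]
    rw [Finset.sum_congr rfl (fun v _ => hR v)]
    rw [← Finset.sum_product', ← Finset.sum_product']
    rw [← Finset.sum_filter, ← Finset.sum_filter]
    apply Finset.sum_nbij' (i := fun p : (Fin r → ℕ) × (Fin r → ℕ) =>
        ((fun i => p.1 i - p.2 i, p.2) : (Fin r → ℕ) × (Fin r → ℕ)))
      (j := fun q : (Fin r → ℕ) × (Fin r → ℕ) =>
        ((fun i => q.1 i + q.2 i, q.2) : (Fin r → ℕ) × (Fin r → ℕ)))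
    · intro p hp
      rw [Finset.mem_filter, Finset.mem_product, Fintype.mem_piFinset,
        Fintype.mem_piFinset] at hp
      rw [Finset.mem_filter, Finset.mem_product, Fintype.mem_piFinset,
        Fintype.mem_piFinset]
      dsimp only
      obtain ⟨⟨h1, h2⟩, h3⟩ := hp
      refine ⟨⟨?_, h2⟩, ?_⟩
      · intro i
        rw [Finset.mem_range]
        have := Finset.mem_range.1 (h1 i)
        omega
      · intro i
        have := Finset.mem_range.1 (h1 i)
        have := h3 i
        omega
    · intro q hq
      rw [Finset.mem_filter, Finset.mem_product, Fintype.mem_piFinset,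
        Fintype.mem_piFinset] at hq
      rw [Finset.mem_filter, Finset.mem_product, Fintype.mem_piFinset,
        Fintype.mem_piFinset]
      dsimp only
      obtain ⟨⟨h1, h2⟩, h3⟩ := hq
      refine ⟨⟨?_, h2⟩, ?_⟩
      · intro i
        rw [Finset.mem_range]
        exact h3 i
      · intro i
        omega
    · intro p hp
      rw [Finset.mem_filter] at hp
      have : (fun i => p.1 i - p.2 i + p.2 i) = p.1 := by
        funext i
        have := hp.2 i
        omega
      exact Prod.ext this rfl
    · intro q hq
      have : (fun i => q.1 i + q.2 i - q.2 i) = q.1 := by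
        funext i
        omega
      exact Prod.ext this rfl
    · intro p hp
      rw [Finset.mem_filter] at hp
      have hdesc : ∀ i : Fin r, p.1 i - p.2 i + p.2 i = p.1 i := by
        intro i
        have := hp.2 i
        omega
      have h2 : (∏ i, (((p.1 i - p.2 i + p.2 i).descFactorial (s i - α i) : ℕ) : ℚ))
          = ∏ i, (((p.1 i).descFactorial (s i - α i) : ℕ) : ℚ) := by
        apply Finset.prod_congr rfl
        intro i _
        rw [hdesc i]
      show (∏ i, ((-1:ℚ)^(p.2 i) * (((s i + 1).choose (p.2 i) : ℕ) : ℚ)))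
            * (H fun i => p.1 i - p.2 i : ℚ)
            * ∏ i, ((p.1 i).descFactorial (s i - α i) : ℚ)
          = (H fun i => p.1 i - p.2 i : ℚ)
            * ((∏ i, ((-1:ℚ)^(p.2 i) * (((s i + 1).choose (p.2 i) : ℕ) : ℚ)))
              * ∏ i, (((p.1 i - p.2 i + p.2 i).descFactorial (s i - α i) : ℕ) : ℚ))
      rw [h2]
      ring
  -- Step 4 : factor the inner sum into one-variable sums
  have hstep4 : ∀ v : Fin r → ℕ,
      (∑ e ∈ Fintype.piFinset (fun i : Fin r => Finset.range (s i + 2)),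
        (if (∀ i, v i + e i < T0) then
          (∏ i, ((-1:ℚ)^(e i) * (((s i + 1).choose (e i) : ℕ) : ℚ)))
            * ∏ i, (((v i + e i).descFactorial (s i - α i) : ℕ) : ℚ) else 0))
      = ∏ i, g1 (s i) (s i - α i) T0 (v i) := by
    intro v
    unfold g1
    rw [Finset.prod_univ_sum]
    apply Finset.sum_congr rfl
    intro e _
    rw [prod_ite_zero' (fun i => v i + e i < T0)
      (fun i => (-1:ℚ)^(e i) * (((s i + 1).choose (e i) : ℕ) : ℚ)
        * (((v i + e i).descFactorial (s i - α i) : ℕ) : ℚ))]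
    by_cases h : ∀ i, v i + e i < T0
    · rw [if_pos h, if_pos h, ← Finset.prod_mul_distrib]
    · rw [if_neg h, if_neg h]
  -- Step 5 : replace H by the Hilbert polynomial
  have hstep5 : ∑ v ∈ Fintype.piFinset (fun _ : Fin r => Finset.range T0),
        (H v : ℚ) * ∏ i, g1 (s i) (s i - α i) T0 (v i)
      = ∑ v ∈ Fintype.piFinset (fun _ : Fin r => Finset.range T0),
        (∑ β ∈ Fintype.piFinset (fun i : Fin r => Finset.range (s i + 1)),
          c β * ∏ i, ((v i + β i).choose (β i) : ℚ))
          * ∏ i, g1 (s i) (s i - α i) T0 (v i) := by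
    apply Finset.sum_congr rfl
    intro v _
    by_cases hv : ∀ i, M ≤ v i
    · rw [hM v hv]
    · push_neg at hv
      obtain ⟨i0, hi0⟩ := hv
      have hg : g1 (s i0) (s i0 - α i0) T0 (v i0) = 0 := by
        apply g1_eq_zero
        · exact Nat.sub_le _ _
        · have := hT0s i0
          omega
      rw [Finset.prod_eq_zero (Finset.mem_univ i0) hg, mul_zero, mul_zero]
  -- Step 6 : swap sums and factor per coordinate
  have hstep6 : ∑ v ∈ Fintype.piFinset (fun _ : Fin r => Finset.range T0),
        (∑ β ∈ Fintype.piFinset (fun i : Fin r => Finset.range (s i + 1)),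
          c β * ∏ i, ((v i + β i).choose (β i) : ℚ))
          * ∏ i, g1 (s i) (s i - α i) T0 (v i)
      = ∑ β ∈ Fintype.piFinset (fun i : Fin r => Finset.range (s i + 1)),
          c β * ∏ i, (∑ x ∈ Finset.range T0,
            (((x + β i).choose (β i) : ℕ) : ℚ) * g1 (s i) (s i - α i) T0 x) := by
    have h6a : ∀ v : Fin r → ℕ,
        (∑ β ∈ Fintype.piFinset (fun i : Fin r => Finset.range (s i + 1)),
          c β * ∏ i, ((v i + β i).choose (β i) : ℚ))
          * ∏ i, g1 (s i) (s i - α i) T0 (v i)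
        = ∑ β ∈ Fintype.piFinset (fun i : Fin r => Finset.range (s i + 1)),
            c β * ∏ i, ((((v i + β i).choose (β i) : ℕ) : ℚ)
              * g1 (s i) (s i - α i) T0 (v i)) := by
      intro v
      rw [Finset.sum_mul]
      apply Finset.sum_congr rfl
      intro β _
      rw [mul_assoc, ← Finset.prod_mul_distrib]
    rw [Finset.sum_congr rfl (fun v _ => h6a v), Finset.sum_comm]
    apply Finset.sum_congr rfl
    intro β _
    rw [← Finset.mul_sum]
    congr 1
    exact (Finset.prod_univ_sum (fun _ => Finset.range T0)
      (fun i x => (((x + β i).choose (β i) : ℕ) : ℚ) * g1 (s i) (s i - α i) T0 x)).symm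
  -- Step 7 : evaluate the one-variable sums
  have hstep7 : ∑ β ∈ Fintype.piFinset (fun i : Fin r => Finset.range (s i + 1)),
        c β * ∏ i, (∑ x ∈ Finset.range T0,
          (((x + β i).choose (β i) : ℕ) : ℚ) * g1 (s i) (s i - α i) T0 x)
      = c α * ∏ i, ((-1:ℚ)^(s i - α i) * (((s i - α i).factorial : ℕ) : ℚ)) := by
    have h7a : ∀ β ∈ Fintype.piFinset (fun i : Fin r => Finset.range (s i + 1)),
        c β * ∏ i, (∑ x ∈ Finset.range T0,
          (((x + β i).choose (β i) : ℕ) : ℚ) * g1 (s i) (s i - α i) T0 x)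
        = if β = α then c β * ∏ i, ((-1:ℚ)^(s i - α i) * (((s i - α i).factorial : ℕ) : ℚ)) else 0 := by
      intro β hβ
      have hβs : ∀ i, β i ≤ s i := by
        intro i
        have := (Fintype.mem_piFinset.1 hβ) i
        rw [Finset.mem_range] at this
        omega
      have hone : ∀ i : Fin r, (∑ x ∈ Finset.range T0,
          (((x + β i).choose (β i) : ℕ) : ℚ) * g1 (s i) (s i - α i) T0 x)
          = if β i = α i then (-1:ℚ)^(s i - α i) * (((s i - α i).factorial : ℕ) : ℚ) else 0 := by
        intro i
        rw [D1b (s i) (s i - α i) (β i) T0 (Nat.sub_le _ _) (hβs i) (by have := hT0s i; omega)]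
        have hcond : (β i + (s i - α i) = s i) ↔ (β i = α i) := by
          have := hαs i
          have := hβs i
          omega
        by_cases h : β i = α i
        · rw [if_pos (hcond.2 h), if_pos h]
        · rw [if_neg (fun hc => h (hcond.1 hc)), if_neg h]
      rw [Finset.prod_congr rfl (fun i _ => hone i),
        prod_ite_zero' (fun i => β i = α i)
          (fun i => (-1:ℚ)^(s i - α i) * (((s i - α i).factorial : ℕ) : ℚ))]
      have hfun : (∀ i, β i = α i) ↔ β = α := funext_iff.symm
      by_cases h : β = α
      · rw [if_pos (hfun.2 h), if_pos h]
      · rw [if_neg (fun hc => h (hfun.1 hc)), if_neg h, mul_zero]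
    rw [Finset.sum_congr rfl h7a, Finset.sum_ite_eq' _ α
      (fun β => c β * ∏ i, ((-1:ℚ)^(s i - α i) * (((s i - α i).factorial : ℕ) : ℚ))), if_pos hα]
  -- Put everything together
  have key : eval (fun _ => (1:ℚ)) (iterD (fun i => s i - α i) Nq)
      = c α * ∏ i, ((-1:ℚ)^(s i - α i) * (((s i - α i).factorial : ℕ) : ℚ)) := by
    rw [hstep1, Finset.sum_congr rfl (fun u _ => hstep2 u), hstep3,
      Finset.sum_congr rfl (fun v _ => by rw [hstep4 v]), hstep5, hstep6, hstep7]
  rw [key]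
  have hprod : ∏ i, ((-1:ℚ)^(s i - α i) * (((s i - α i).factorial : ℕ) : ℚ))
      = (-1:ℚ)^(∑ i, (s i - α i)) * ∏ i, (((s i - α i).factorial : ℕ) : ℚ) := by
    rw [Finset.prod_mul_distrib, Finset.prod_pow_eq_pow_sum]
  rw [hprod]
  have hne : (∏ i, (((s i - α i).factorial : ℕ) : ℚ)) ≠ 0 := by
    apply Finset.prod_ne_zero_iff.2
    intro i _
    exact_mod_cast (Nat.factorial_ne_zero _)
  have hsq : (-1:ℚ)^(∑ i, (s i - α i)) * (-1:ℚ)^(∑ i, (s i - α i)) = 1 := by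
    rw [← pow_add]
    exact Even.neg_one_pow ⟨∑ i, (s i - α i), rfl⟩
  symm
  rw [div_eq_mul_inv]
  calc ((-1:ℚ)^(∑ i, (s i - α i)) * (∏ i, (((s i - α i).factorial : ℕ) : ℚ))⁻¹)
        * (c α * ((-1:ℚ)^(∑ i, (s i - α i)) * ∏ i, (((s i - α i).factorial : ℕ) : ℚ)))
      = c α * ((-1:ℚ)^(∑ i, (s i - α i)) * (-1:ℚ)^(∑ i, (s i - α i)))
        * ((∏ i, (((s i - α i).factorial : ℕ) : ℚ))
          * (∏ i, (((s i - α i).factorial : ℕ) : ℚ))⁻¹) := by ring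
    _ = c α := by
        rw [hsq, mul_inv_cancel₀ hne, mul_one, mul_one]
end
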